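/- Suppose (f_j^R, f_j^I) satisfy condition H1 with constants λ_j^{RR}, λ_j^{RI}, λ_j^{IR}, λ_j^{II} and (g_j^R, g_j^I) satisfy condition H2 with constants μ_j^{RR}, μ_j^{RI}, μ_j^{IR}, μ_j^{II}, for j = 1,…,n. Suppose there exist positive reals ξ_1,…,ξ_n, φ_1,…,φ_n and ε > 0 such that for every k = 1,…,n both: (i) ξ_k(−d_k + ε) + [ξ_k a_{kk}^R + Σ_{j≠k} ξ_j|a_{jk}^R| + Σ_{j=1}^n φ_j|a_{jk}^I|]⁺ λ_k^{RR} + [−ξ_k a_{kk}^I + Σ_{j≠k} ξ_j|a_{jk}^I| + Σ_{j=1}^n φ_j|a_{jk}^R|]⁺ λ_k^{IR} + Σ_{j=1}^n (ξ_j(|b_{jk}^R|μ_k^{RR} + |b_{jk}^I|μ_k^{IR}) + φ_j(|b_{jk}^R|μ_k^{IR} + |b_{jk}^I|μ_k^{RR})) e^{ε τ_{jk}} ≤ 0, and (ii) φ_k(−d_k + ε) + [φ_k a_{kk}^R + Σ_{j≠k} φ_j|a_{jk}^R| + Σ_{j=1}^n ξ_j|a_{jk}^I|]⁺ λ_k^{II}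 + [φ_k a_{kk}^I + Σ_{j≠k} φ_j|a_{jk}^I| + Σ_{j=1}^n ξ_j|a_{jk}^R|]⁺ λ_k^{RI} + Σ_{j=1}^n (ξ_j(|b_{jk}^R|μ_k^{RI} + |b_{jk}^I|μ_k^{II}) + φ_j(|b_{jk}^R|μ_k^{II} + |b_{jk}^I|μ_k^{RI})) e^{ε τ_{jk}} ≤ 0. If the network admits at least one solution, then it has exactly one equilibrium Z̄ ∈ ℝ^{2n}, and for every solution Z(t) there is a constant c > 0 such that ‖Z(t) − Z̄‖_{ξ,1} ≤ c e^{−εt} and ‖(d/dt)Z(t)‖_{ξ,1} ≤ c e^{−εt} for all t ≥ 0. -/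

import Mathlib

open Finset

/-- A solution of the delayed complex-valued network, decomposed into real and
imaginary parts. -/
def IsSolution (n : ℕ) (d : Fin n → ℝ)
    (aR aI bR bI τ : Fin n → Fin n → ℝ)
    (uR uI : Fin n → ℝ)
    (fR fI gR gI : Fin n → ℝ → ℝ → ℝ)
    (zR zI : Fin n → ℝ → ℝ) : Prop :=
  (∀ j, ContDiff ℝ 1 (zR j)) ∧ (∀ j, ContDiff ℝ 1 (zI j)) ∧
  (∀ j : Fin n, ∀ t : ℝ, 0 ≤ t →
    deriv (zR j) t =
      -(d j) * zR j t
      + (∑ k, (aR j k * fR k (zR k t) (zI k t) - aI j k * fI k (zR k t) (zI k t)))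
      + (∑ k, (bR j k * gR k (zR k (t - τ j k)) (zI k (t - τ j k))
               - bI j k * gI k (zR k (t - τ j k)) (zI k (t - τ j k))))
      + uR j) ∧
  (∀ j : Fin n, ∀ t : ℝ, 0 ≤ t →
    deriv (zI j) t =
      -(d j) * zI j t
      + (∑ k, (aR j k * fI k (zR k t) (zI k t) + aI j k * fR k (zR k t) (zI k t)))
      + (∑ k, (bR j k * gI k (zR k (t - τ j k)) (zI k (t - τ j k))
               + bI j k * gR k (zR k (t - τ j k)) (zI k (t - τ j k))))
      + uI j)

/-- An equilibrium of the network: a point of ℝ^{2n} at which both right-hand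
sides vanish. -/
def IsEquilibrium (n : ℕ) (d : Fin n → ℝ)
    (aR aI bR bI : Fin n → Fin n → ℝ)
    (uR uI : Fin n → ℝ)
    (fR fI gR gI : Fin n → ℝ → ℝ → ℝ)
    (zbR zbI : Fin n → ℝ) : Prop :=
  (∀ j : Fin n,
    -(d j) * zbR j
    + (∑ k, (aR j k * fR k (zbR k) (zbI k) - aI j k * fI k (zbR k) (zbI k)))
    + (∑ k, (bR j k * gR k (zbR k) (zbI k) - bI j k * gI k (zbR k) (zbI k)))
    + uR j = 0) ∧
  (∀ j : Fin n,
    -(d j) * zbI j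
    + (∑ k, (aR j k * fI k (zbR k) (zbI k) + aI j k * fR k (zbR k) (zbI k)))
    + (∑ k, (bR j k * gI k (zbR k) (zbI k) + bI j k * gR k (zbR k) (zbI k)))
    + uI j = 0)

/-- Condition H1: continuously differentiable with positive, bounded partial
derivatives. -/
def CondH1 (f1 f2 : ℝ → ℝ → ℝ) (lRR lRI lIR lII : ℝ) : Prop :=
  ContDiff ℝ 1 (fun p : ℝ × ℝ => f1 p.1 p.2) ∧
  ContDiff ℝ 1 (fun p : ℝ × ℝ => f2 p.1 p.2) ∧
  (∀ x y : ℝ,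
    (0 < deriv (fun s => f1 s y) x ∧ deriv (fun s => f1 s y) x ≤ lRR) ∧
    (0 < deriv (fun s => f1 x s) y ∧ deriv (fun s => f1 x s) y ≤ lRI) ∧
    (0 < deriv (fun s => f2 s y) x ∧ deriv (fun s => f2 s y) x ≤ lIR) ∧
    (0 < deriv (fun s => f2 x s) y ∧ deriv (fun s => f2 x s) y ≤ lII))

/-- Condition H2: continuously differentiable with bounded partial derivatives. -/
def CondH2 (g1 g2 : ℝ → ℝ → ℝ) (mRR mRI mIR mII : ℝ) : Prop :=
  ContDiff ℝ 1 (fun p : ℝ × ℝ => g1 p.1 p.2) ∧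
  ContDiff ℝ 1 (fun p : ℝ × ℝ => g2 p.1 p.2) ∧
  (∀ x y : ℝ,
    |deriv (fun s => g1 s y) x| ≤ mRR ∧
    |deriv (fun s => g1 x s) y| ≤ mRI ∧
    |deriv (fun s => g2 s y) x| ≤ mIR ∧
    |deriv (fun s => g2 x s) y| ≤ mII)

section Aux
open Set Filter


noncomputable def sgn (x : ℝ) : ℝ := if 0 ≤ x then 1 else -1

lemma sgn_abs_le (x : ℝ) : |sgn x| ≤ 1 := by
  unfold sgn; split <;> simp

lemma sgn_mul_self (x : ℝ) : sgn x * x = |x| := by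
  unfold sgn; split
  · rw [abs_of_nonneg ‹_›]; ring
  · rw [abs_of_neg (lt_of_not_ge ‹_›)]; ring

lemma abs_add_mul_le {a b σ h : ℝ} (h1 : |σ| ≤ 1) (h2 : σ * a = |a|)
    (h3 : a = 0 → |b| ≤ σ * b) (hh0 : 0 < h)
    (hsmall : a ≠ 0 → h * (|b| + 1) < |a|) :
    |a + h * b| ≤ |a| + h * (σ * b) := by
  by_cases ha : a = 0
  · subst ha
    have := h3 rfl
    have : |(0:ℝ) + h * b| = h * |b| := by
      rw [zero_add, abs_mul, abs_of_pos hh0]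
    rw [this]
    have : h * |b| ≤ h * (σ * b) := by nlinarith [h3 rfl]
    simpa using this
  · have hw := hsmall ha
    have hb : |b| < |a| / h := by
      rw [lt_div_iff₀ hh0]; nlinarith
    rcases lt_or_gt_of_ne ha with hneg | hpos
    · have hσ : σ = -1 := by
        have h2' : σ * a = (-1) * a := by rw [h2, abs_of_neg hneg]; ring
        exact mul_right_cancel₀ (ne_of_lt hneg) h2'
      have habs : |a| = -a := abs_of_neg hneg
      have hneg2 : a + h * b < 0 := by
        have : h * b ≤ h * |b| := by
          have := le_abs_self b
          nlinarith
        nlinarith [abs_nonneg b]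
      rw [abs_of_neg hneg2, hσ, habs]; ring_nf; nlinarith
    · have hσ : σ = 1 := by
        have h2' : σ * a = 1 * a := by rw [h2, abs_of_pos hpos]; ring
        exact mul_right_cancel₀ (ne_of_gt hpos) h2'
      have habs : |a| = a := abs_of_pos hpos
      have hpos2 : 0 < a + h * b := by
        have : -(h * b) ≤ h * |b| := by
          have := neg_abs_le b
          nlinarith
        nlinarith [abs_nonneg b]
      rw [abs_of_pos hpos2, hσ, habs]; nlinarith

/-- Key one-sided estimate for |u| near a point where u is differentiable. -/
lemma abs_eventually_le {u : ℝ → ℝ} {u' t σ δ : ℝ}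
    (hu : HasDerivAt u u' t) (h1 : |σ| ≤ 1) (h2 : σ * u t = |u t|)
    (h3 : u t = 0 → |u'| ≤ σ * u') (hδ : 0 < δ) :
    ∀ᶠ z in nhdsWithin t (Ioi t), |u z| ≤ |u t| + (σ * u' + δ) * (z - t) := by
  have h4 : ∀ᶠ z in nhds t, |u z - u t - (z - t) * u'| ≤ (δ/2) * |z - t| := by
    have := hu.isLittleO.def (show (0:ℝ) < δ/2 by linarith)
    simpa [Real.norm_eq_abs, smul_eq_mul] using this
  set w : ℝ := if u t = 0 then 1 else |u t| / (|u'| + 1) with hwdef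
  have hw0 : 0 < w := by
    rw [hwdef]; split
    · norm_num
    · have : 0 < |u t| := abs_pos.mpr ‹_›
      positivity
  have h5 : Ioo t (t + w) ∈ nhdsWithin t (Ioi t) :=
    Ioo_mem_nhdsGT_of_mem ⟨le_refl t, by linarith⟩
  filter_upwards [nhdsWithin_le_nhds h4, h5] with z hz4 hz5
  obtain ⟨hzt, hzw⟩ := hz5
  have hh0 : 0 < z - t := by linarith
  have hsmall : u t ≠ 0 → (z - t) * (|u'| + 1) < |u t| := by
    intro hne
    have : w = |u t| / (|u'| + 1) := by rw [hwdef, if_neg hne]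
    have hzw' : z - t < |u t| / (|u'| + 1) := by rw [← this]; linarith
    have hd : 0 < |u'| + 1 := by positivity
    calc (z - t) * (|u'| + 1) < |u t| / (|u'| + 1) * (|u'| + 1) := by
          exact mul_lt_mul_of_pos_right hzw' hd
      _ = |u t| := by field_simp
  have key : |u t + (z - t) * u'| ≤ |u t| + (z - t) * (σ * u') := by
    apply abs_add_mul_le h1 h2 h3 hh0
    intro hne
    have := hsmall hne
    nlinarith
  have step1 : |u z - (u t + (z - t) * u')| ≤ (δ/2) * (z - t) := by
    rw [abs_of_pos hh0] at hz4
    calc |u z - (u t + (z - t) * u')| = |u z - u t - (z - t) * u'| := by ring_nf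
      _ ≤ (δ/2) * (z - t) := hz4
  calc |u z| = |(u t + (z - t) * u') + (u z - (u t + (z - t) * u'))| := by ring_nf
    _ ≤ |u t + (z - t) * u'| + |u z - (u t + (z - t) * u')| := abs_add_le _ _
    _ ≤ (|u t| + (z - t) * (σ * u')) + (δ/2) * (z - t) := by linarith
    _ ≤ |u t| + (σ * u' + δ) * (z - t) := by nlinarith

/-- Mean value decomposition with positive bounded slope. -/
lemma exists_slope_decomp {f : ℝ → ℝ} {lam : ℝ} (hlam : 0 < lam)
    (hdiff : ∀ x : ℝ, HasDerivAt f (deriv f x) x)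
    (hbd : ∀ x : ℝ, 0 < deriv f x ∧ deriv f x ≤ lam) (x x' : ℝ) :
    ∃ p : ℝ, 0 < p ∧ p ≤ lam ∧ f x - f x' = p * (x - x') := by
  rcases eq_or_ne x x' with h | h
  · exact ⟨lam, hlam, le_refl _, by rw [h]; ring⟩
  · rcases lt_or_gt_of_ne h with hlt | hgt
    · obtain ⟨c, _, hc⟩ := exists_hasDerivAt_eq_slope f (deriv f) hlt
        (fun y _ => (hdiff y).continuousAt.continuousWithinAt)
        (fun y _ => hdiff y)
      refine ⟨deriv f c, (hbd c).1, (hbd c).2, ?_⟩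
      rw [hc]
      have hne : x' - x ≠ 0 := by intro hz; apply h; linarith
      field_simp
      ring
    · obtain ⟨c, _, hc⟩ := exists_hasDerivAt_eq_slope f (deriv f) hgt
        (fun y _ => (hdiff y).continuousAt.continuousWithinAt)
        (fun y _ => hdiff y)
      refine ⟨deriv f c, (hbd c).1, (hbd c).2, ?_⟩
      rw [hc]
      have hne : x - x' ≠ 0 := by intro hz; apply h; linarith
      field_simp

/-- Mean value bound with bounded absolute slope. -/
lemma abs_sub_le_of_deriv_bound {f : ℝ → ℝ} {m : ℝ}
    (hdiff : ∀ x : ℝ, HasDerivAt f (deriv f x) x)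
    (hbd : ∀ x : ℝ, |deriv f x| ≤ m) (x x' : ℝ) :
    |f x - f x'| ≤ m * |x - x'| := by
  rcases eq_or_ne x x' with h | h
  · simp [h]
  · have key : ∀ a b : ℝ, a < b → |f b - f a| ≤ m * |b - a| := by
      intro a b hab
      obtain ⟨c, _, hc⟩ := exists_hasDerivAt_eq_slope f (deriv f) hab
        (fun y _ => (hdiff y).continuousAt.continuousWithinAt)
        (fun y _ => hdiff y)
      have h1 : f b - f a = deriv f c * (b - a) := by
        rw [hc]
        have hne : b - a ≠ 0 := by intro hz; linarith
        field_simp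
      rw [h1, abs_mul]
      exact mul_le_mul_of_nonneg_right (hbd c) (abs_nonneg _)
    rcases lt_or_gt_of_ne h with hlt | hgt
    · have := key x x' hlt
      rwa [abs_sub_comm (f x') (f x), abs_sub_comm x' x] at this
    · exact key x' x hgt

/-- Chain rule for a two-variable C¹ function composed with two curves. -/
lemma partial_hasDerivAt {F : ℝ × ℝ → ℝ} (hF : ContDiff ℝ 1 F)
    {x y : ℝ → ℝ} {x' y' : ℝ} {t : ℝ}
    (hx : HasDerivAt x x' t) (hy : HasDerivAt y y' t) :
    HasDerivAt (fun s => F (x s, y s))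
      (deriv (fun s => F (s, y t)) (x t) * x' +
       deriv (fun s => F (x t, s)) (y t) * y') t := by
  have hFd : DifferentiableAt ℝ F (x t, y t) :=
    (hF.differentiable one_ne_zero).differentiableAt
  set L := fderiv ℝ F (x t, y t) with hL
  have hmain : HasDerivAt (fun s => F (x s, y s)) (L (x', y')) t :=
    hFd.hasFDerivAt.comp_hasDerivAt t (hx.prodMk hy)
  have h1 : HasDerivAt (fun s => F (s, y t)) (L (1, 0)) (x t) :=
    hFd.hasFDerivAt.comp_hasDerivAt (x t)
      ((hasDerivAt_id (x t)).prodMk (hasDerivAt_const (x t) (y t)))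
  have h2 : HasDerivAt (fun s => F (x t, s)) (L (0, 1)) (y t) :=
    hFd.hasFDerivAt.comp_hasDerivAt (y t)
      ((hasDerivAt_const (y t) (x t)).prodMk (hasDerivAt_id (y t)))
  have e1 : deriv (fun s => F (s, y t)) (x t) = L (1, 0) := h1.deriv
  have e2 : deriv (fun s => F (x t, s)) (y t) = L (0, 1) := h2.deriv
  have e3 : L (x', y') = L (1, 0) * x' + L (0, 1) * y' := by
    have : (x', y') = x' • ((1:ℝ), (0:ℝ)) + y' • ((0:ℝ), (1:ℝ)) := by
      simp [Prod.ext_iff]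
    rw [this, map_add, map_smul, map_smul, smul_eq_mul, smul_eq_mul]
    ring
  rw [e1, e2, ← e3]
  exact hmain

/-- A continuous function with nonpositive right Dini derivative on `(0,∞)` is
antitone there. -/
lemma antitone_of_dini {V : ℝ → ℝ} (hV : Continuous V)
    (hd : ∀ t : ℝ, 0 < t → ∀ δ : ℝ, 0 < δ →
      ∀ᶠ z in nhdsWithin t (Ioi t), V z ≤ V t + δ * (z - t)) :
    ∀ a b : ℝ, 0 < a → a ≤ b → V b ≤ V a := by
  intro a b ha hab
  have key : ∀ δ : ℝ, 0 < δ → V b ≤ V a + δ * (b - a) := by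
    intro δ hδ
    set S : Set ℝ := {x | x ∈ Icc a b ∧ V x ≤ V a + δ * (x - a)} with hS
    have haS : a ∈ S := ⟨⟨le_refl a, hab⟩, by simp⟩
    have hSne : S.Nonempty := ⟨a, haS⟩
    have hSbdd : BddAbove S := ⟨b, fun x hx => hx.1.2⟩
    have hSclosed : IsClosed S := by
      have : S = Icc a b ∩ {x | V x - δ * (x - a) ≤ V a} := by
        ext x
        constructor
        · rintro ⟨hx1, hx2⟩; exact ⟨hx1, by simp; linarith⟩
        · rintro ⟨hx1, hx2⟩; simp at hx2; exact ⟨hx1, by linarith⟩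
      rw [this]
      exact isClosed_Icc.inter (isClosed_le (by continuity) continuous_const)
    set c := sSup S with hc
    have hcS : c ∈ S := hSclosed.csSup_mem hSne hSbdd
    have hcb : c ≤ b := csSup_le hSne (fun x hx => hx.1.2)
    have hac : a ≤ c := le_csSup hSbdd haS
    rcases eq_or_lt_of_le hcb with hceq | hclt
    · rw [← hceq]; exact hcS.2
    · exfalso
      have hc0 : 0 < c := lt_of_lt_of_le ha hac
      have h1 := hd c hc0 δ hδ
      have h2 : ∀ᶠ z in nhdsWithin c (Ioi c), z ∈ Ioo c b :=
        Ioo_mem_nhdsGT_of_mem ⟨le_refl c, hclt⟩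
      obtain ⟨z, hz1, hz2⟩ := (h1.and h2).exists
      have hzS : z ∈ S := by
        refine ⟨⟨le_trans hac (le_of_lt hz2.1), le_of_lt hz2.2⟩, ?_⟩
        have := hcS.2
        calc V z ≤ V c + δ * (z - c) := hz1
          _ ≤ V a + δ * (c - a) + δ * (z - c) := by linarith
          _ = V a + δ * (z - a) := by ring
      exact absurd (le_csSup hSbdd hzS) (not_le.mpr hz2.1)
  rcases eq_or_lt_of_le hab with heq | hlt
  · rw [heq]
  · by_contra hcon
    push_neg at hcon
    have hba : 0 < b - a := by linarith
    have hkey := key ((V b - V a) / (2 * (b - a)))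
      (div_pos (by linarith) (by linarith))
    have heq2 : (V b - V a) / (2 * (b - a)) * (b - a) = (V b - V a) / 2 := by
      field_simp
    rw [heq2] at hkey
    linarith

lemma smul_abs_le {c s a w : ℝ} (hc : 0 ≤ c) (hs : |s| ≤ 1) :
    c * s * a * w ≤ c * |a| * |w| := by
  have h1 : s * (a * w) ≤ |a| * |w| := by
    calc s * (a * w) ≤ |s * (a * w)| := le_abs_self _
      _ = |s| * (|a| * |w|) := by rw [abs_mul, abs_mul]
      _ ≤ 1 * (|a| * |w|) := by
          apply mul_le_mul_of_nonneg_right hs (by positivity)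
      _ = |a| * |w| := one_mul _
  calc c * s * a * w = c * (s * (a * w)) := by ring
    _ ≤ c * (|a| * |w|) := mul_le_mul_of_nonneg_left h1 hc
    _ = c * |a| * |w| := by ring

lemma pmax_bound {P L x M y : ℝ} (hP : 0 < P) (hPL : P ≤ L) (hx : x ≤ M * y)
    (hy : 0 ≤ y) : P * x ≤ max M 0 * L * y := by
  rcases le_or_gt 0 M with hM | hM
  · rw [max_eq_left hM]
    calc P * x ≤ P * (M * y) := mul_le_mul_of_nonneg_left hx hP.le
      _ ≤ L * (M * y) := mul_le_mul_of_nonneg_right hPL (by positivity)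
      _ = M * L * y := by ring
  · rw [max_eq_right hM.le]
    have h1 : M * y ≤ 0 := mul_nonpos_of_nonpos_of_nonneg hM.le hy
    have h2 : P * x ≤ P * (M * y) := mul_le_mul_of_nonneg_left hx hP.le
    nlinarith

lemma inner_bound {n : ℕ} (k : Fin n) (c1 c2 s1 s2 a1 a2 : Fin n → ℝ) (w : ℝ)
    (hc1 : ∀ j, 0 ≤ c1 j) (hc2 : ∀ j, 0 ≤ c2 j)
    (hs1 : ∀ j, |s1 j| ≤ 1) (hs2 : ∀ j, |s2 j| ≤ 1)
    (hdiag : s1 k * w = |w|) :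
    w * (∑ j, (c1 j * s1 j * a1 j + c2 j * s2 j * a2 j)) ≤
      (c1 k * a1 k + (∑ j ∈ Finset.univ.erase k, c1 j * |a1 j|)
        + (∑ j, c2 j * |a2 j|)) * |w| := by
  have e1 : w * (∑ j, (c1 j * s1 j * a1 j + c2 j * s2 j * a2 j)) =
      (∑ j, c1 j * s1 j * a1 j * w) + (∑ j, c2 j * s2 j * a2 j * w) := by
    rw [Finset.mul_sum, ← Finset.sum_add_distrib]
    exact Finset.sum_congr rfl (fun j _ => by ring)
  rw [e1]
  have e2 : (∑ j, c1 j * s1 j * a1 j * w) =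
      c1 k * s1 k * a1 k * w + ∑ j ∈ Finset.univ.erase k, c1 j * s1 j * a1 j * w := by
    exact (Finset.add_sum_erase _ _ (Finset.mem_univ k)).symm
  have e3 : c1 k * s1 k * a1 k * w = c1 k * a1 k * |w| := by
    rw [← hdiag]; ring
  have h4 : ∑ j ∈ Finset.univ.erase k, c1 j * s1 j * a1 j * w ≤
      ∑ j ∈ Finset.univ.erase k, c1 j * |a1 j| * |w| :=
    Finset.sum_le_sum (fun j _ => smul_abs_le (hc1 j) (hs1 j))
  have h5 : (∑ j, c2 j * s2 j * a2 j * w) ≤ ∑ j, c2 j * |a2 j| * |w| :=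
    Finset.sum_le_sum (fun j _ => smul_abs_le (hc2 j) (hs2 j))
  have e6 : (c1 k * a1 k + (∑ j ∈ Finset.univ.erase k, c1 j * |a1 j|)
        + (∑ j, c2 j * |a2 j|)) * |w| =
      c1 k * a1 k * |w| + (∑ j ∈ Finset.univ.erase k, c1 j * |a1 j| * |w|)
        + (∑ j, c2 j * |a2 j| * |w|) := by
    rw [add_mul, add_mul, Finset.sum_mul, Finset.sum_mul]
  rw [e6, e2, e3]
  linarith

lemma alg_core (n : ℕ)
    (d : Fin n → ℝ) (aR aI bR bI : Fin n → Fin n → ℝ)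
    (ξ φ : Fin n → ℝ) (hξ : ∀ j, 0 ≤ ξ j) (hφ : ∀ j, 0 ≤ φ j)
    (lRR lRI lIR lII mRR mRI mIR mII : Fin n → ℝ)
    (u v σ ρ PRR PRI PIR PII : Fin n → ℝ)
    (GR GI A B : Fin n → Fin n → ℝ)
    (hσ1 : ∀ j, |σ j| ≤ 1) (hσ2 : ∀ j, σ j * u j = |u j|)
    (hρ1 : ∀ j, |ρ j| ≤ 1) (hρ2 : ∀ j, ρ j * v j = |v j|)
    (hPRR : ∀ k, 0 < PRR k ∧ PRR k ≤ lRR k)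
    (hPRI : ∀ k, 0 < PRI k ∧ PRI k ≤ lRI k)
    (hPIR : ∀ k, 0 < PIR k ∧ PIR k ≤ lIR k)
    (hPII : ∀ k, 0 < PII k ∧ PII k ≤ lII k)
    (hGR : ∀ j k, |GR j k| ≤ mRR k * A j k + mRI k * B j k)
    (hGI : ∀ j k, |GI j k| ≤ mIR k * A j k + mII k * B j k) :
    (∑ j, ξ j * σ j * (-(d j) * u j
        + (∑ k, (aR j k * (PRR k * u k + PRI k * v k)
                 - aI j k * (PIR k * u k + PII k * v k)))
        + (∑ k, (bR j k * GR j k - bI j k * GI j k))))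
    + (∑ j, φ j * ρ j * (-(d j) * v j
        + (∑ k, (aR j k * (PIR k * u k + PII k * v k)
                 + aI j k * (PRR k * u k + PRI k * v k)))
        + (∑ k, (bR j k * GI j k + bI j k * GR j k))))
    ≤ (∑ k, ((max (ξ k * aR k k + (∑ j ∈ Finset.univ.erase k, ξ j * |aR j k|)
                   + (∑ j, φ j * |aI j k|)) 0 * lRR k
              + max (-(ξ k * aI k k) + (∑ j ∈ Finset.univ.erase k, ξ j * |aI j k|)
                   + (∑ j, φ j * |aR j k|)) 0 * lIR k
              - ξ k * d k) * |u k|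
            + (max (φ k * aR k k + (∑ j ∈ Finset.univ.erase k, φ j * |aR j k|)
                   + (∑ j, ξ j * |aI j k|)) 0 * lII k
              + max (φ k * aI k k + (∑ j ∈ Finset.univ.erase k, φ j * |aI j k|)
                   + (∑ j, ξ j * |aR j k|)) 0 * lRI k
              - φ k * d k) * |v k|))
      + (∑ j, ∑ k, ((ξ j * (|bR j k| * mRR k + |bI j k| * mIR k)
                    + φ j * (|bR j k| * mIR k + |bI j k| * mRR k)) * A j k
                  + (ξ j * (|bR j k| * mRI k + |bI j k| * mII k)
                    + φ j * (|bR j k| * mII k + |bI j k| * mRI k)) * B j k)) := by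
  -- Split the left-hand side into three parts.
  have expand : (∑ j, ξ j * σ j * (-(d j) * u j
        + (∑ k, (aR j k * (PRR k * u k + PRI k * v k)
                 - aI j k * (PIR k * u k + PII k * v k)))
        + (∑ k, (bR j k * GR j k - bI j k * GI j k))))
    + (∑ j, φ j * ρ j * (-(d j) * v j
        + (∑ k, (aR j k * (PIR k * u k + PII k * v k)
                 + aI j k * (PRR k * u k + PRI k * v k)))
        + (∑ k, (bR j k * GI j k + bI j k * GR j k))))
    = (∑ j, (ξ j * σ j * (-(d j) * u j) + φ j * ρ j * (-(d j) * v j)))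
      + (∑ j, ∑ k, (ξ j * σ j * (aR j k * (PRR k * u k + PRI k * v k)
                 - aI j k * (PIR k * u k + PII k * v k))
               + φ j * ρ j * (aR j k * (PIR k * u k + PII k * v k)
                 + aI j k * (PRR k * u k + PRI k * v k))))
      + (∑ j, ∑ k, (ξ j * σ j * (bR j k * GR j k - bI j k * GI j k)
               + φ j * ρ j * (bR j k * GI j k + bI j k * GR j k))) := by
    rw [← Finset.sum_add_distrib, ← Finset.sum_add_distrib, ← Finset.sum_add_distrib]
    apply Finset.sum_congr rfl
    intro j _
    simp only [Finset.sum_add_distrib, Finset.sum_sub_distrib, ← Finset.mul_sum]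
    ring
  rw [expand]
  -- the diagonal part
  have hD : (∑ j, (ξ j * σ j * (-(d j) * u j) + φ j * ρ j * (-(d j) * v j)))
      = ∑ k, (-(ξ k * d k * |u k|) - φ k * d k * |v k|) := by
    apply Finset.sum_congr rfl
    intro j _
    linear_combination (-(ξ j * d j)) * hσ2 j + (-(φ j * d j)) * hρ2 j
  -- the delay part
  have hB : (∑ j, ∑ k, (ξ j * σ j * (bR j k * GR j k - bI j k * GI j k)
               + φ j * ρ j * (bR j k * GI j k + bI j k * GR j k)))
      ≤ (∑ j, ∑ k, ((ξ j * (|bR j k| * mRR k + |bI j k| * mIR k)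
                    + φ j * (|bR j k| * mIR k + |bI j k| * mRR k)) * A j k
                  + (ξ j * (|bR j k| * mRI k + |bI j k| * mII k)
                    + φ j * (|bR j k| * mII k + |bI j k| * mRI k)) * B j k)) := by
    apply Finset.sum_le_sum; intro j _
    apply Finset.sum_le_sum; intro k _
    have h1 : ξ j * σ j * bR j k * GR j k ≤ ξ j * |bR j k| * |GR j k| :=
      smul_abs_le (hξ j) (hσ1 j)
    have h2 : ξ j * σ j * (-(bI j k)) * GI j k ≤ ξ j * |(-(bI j k))| * |GI j k| :=
      smul_abs_le (hξ j) (hσ1 j)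
    rw [abs_neg] at h2
    have h3 : φ j * ρ j * bR j k * GI j k ≤ φ j * |bR j k| * |GI j k| :=
      smul_abs_le (hφ j) (hρ1 j)
    have h4 : φ j * ρ j * bI j k * GR j k ≤ φ j * |bI j k| * |GR j k| :=
      smul_abs_le (hφ j) (hρ1 j)
    have h5 : ξ j * |bR j k| * |GR j k| ≤ ξ j * |bR j k| * (mRR k * A j k + mRI k * B j k) :=
      mul_le_mul_of_nonneg_left (hGR j k) (mul_nonneg (hξ j) (abs_nonneg _))
    have h6 : ξ j * |bI j k| * |GI j k| ≤ ξ j * |bI j k| * (mIR k * A j k + mII k * B j k) :=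
      mul_le_mul_of_nonneg_left (hGI j k) (mul_nonneg (hξ j) (abs_nonneg _))
    have h7 : φ j * |bR j k| * |GI j k| ≤ φ j * |bR j k| * (mIR k * A j k + mII k * B j k) :=
      mul_le_mul_of_nonneg_left (hGI j k) (mul_nonneg (hφ j) (abs_nonneg _))
    have h8 : φ j * |bI j k| * |GR j k| ≤ φ j * |bI j k| * (mRR k * A j k + mRI k * B j k) :=
      mul_le_mul_of_nonneg_left (hGR j k) (mul_nonneg (hφ j) (abs_nonneg _))
    nlinarith [h1, h2, h3, h4, h5, h6, h7, h8]
  -- the instantaneous coupling part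
  have hA : (∑ j, ∑ k, (ξ j * σ j * (aR j k * (PRR k * u k + PRI k * v k)
                 - aI j k * (PIR k * u k + PII k * v k))
               + φ j * ρ j * (aR j k * (PIR k * u k + PII k * v k)
                 + aI j k * (PRR k * u k + PRI k * v k))))
      ≤ ∑ k, ((max (ξ k * aR k k + (∑ j ∈ Finset.univ.erase k, ξ j * |aR j k|)
                   + (∑ j, φ j * |aI j k|)) 0 * lRR k
              + max (-(ξ k * aI k k) + (∑ j ∈ Finset.univ.erase k, ξ j * |aI j k|)
                   + (∑ j, φ j * |aR j k|)) 0 * lIR k) * |u k|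
            + (max (φ k * aR k k + (∑ j ∈ Finset.univ.erase k, φ j * |aR j k|)
                   + (∑ j, ξ j * |aI j k|)) 0 * lII k
              + max (φ k * aI k k + (∑ j ∈ Finset.univ.erase k, φ j * |aI j k|)
                   + (∑ j, ξ j * |aR j k|)) 0 * lRI k) * |v k|) := by
    rw [Finset.sum_comm]
    apply Finset.sum_le_sum; intro k _
    have e : (∑ j, (ξ j * σ j * (aR j k * (PRR k * u k + PRI k * v k)
                 - aI j k * (PIR k * u k + PII k * v k))
               + φ j * ρ j * (aR j k * (PIR k * u k + PII k * v k)
                 + aI j k * (PRR k * u k + PRI k * v k))))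
        = PRR k * (u k * (∑ j, (ξ j * σ j * aR j k + φ j * ρ j * aI j k)))
        + PIR k * (u k * (∑ j, (ξ j * σ j * -aI j k + φ j * ρ j * aR j k)))
        + PII k * (v k * (∑ j, (φ j * ρ j * aR j k + ξ j * σ j * -aI j k)))
        + PRI k * (v k * (∑ j, (φ j * ρ j * aI j k + ξ j * σ j * aR j k))) := by
      simp only [Finset.mul_sum, ← Finset.sum_add_distrib]
      apply Finset.sum_congr rfl
      intro j _
      ring
    rw [e]
    have hb1 : u k * (∑ j, (ξ j * σ j * aR j k + φ j * ρ j * aI j k)) ≤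
        (ξ k * aR k k + (∑ j ∈ Finset.univ.erase k, ξ j * |aR j k|)
          + (∑ j, φ j * |aI j k|)) * |u k| :=
      inner_bound k ξ φ σ ρ (fun j => aR j k) (fun j => aI j k) (u k)
        hξ hφ hσ1 hρ1 (hσ2 k)
    have hb2 : u k * (∑ j, (ξ j * σ j * -aI j k + φ j * ρ j * aR j k)) ≤
        (ξ k * -aI k k + (∑ j ∈ Finset.univ.erase k, ξ j * |(-aI j k)|)
          + (∑ j, φ j * |aR j k|)) * |u k| :=
      inner_bound k ξ φ σ ρ (fun j => -aI j k) (fun j => aR j k) (u k)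
        hξ hφ hσ1 hρ1 (hσ2 k)
    have hb2' : u k * (∑ j, (ξ j * σ j * -aI j k + φ j * ρ j * aR j k)) ≤
        (-(ξ k * aI k k) + (∑ j ∈ Finset.univ.erase k, ξ j * |aI j k|)
          + (∑ j, φ j * |aR j k|)) * |u k| := by
      simpa only [abs_neg, mul_neg] using hb2
    have hb3 : v k * (∑ j, (φ j * ρ j * aR j k + ξ j * σ j * -aI j k)) ≤
        (φ k * aR k k + (∑ j ∈ Finset.univ.erase k, φ j * |aR j k|)
          + (∑ j, ξ j * |(-aI j k)|)) * |v k| :=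
      inner_bound k φ ξ ρ σ (fun j => aR j k) (fun j => -aI j k) (v k)
        hφ hξ hρ1 hσ1 (hρ2 k)
    have hb3' : v k * (∑ j, (φ j * ρ j * aR j k + ξ j * σ j * -aI j k)) ≤
        (φ k * aR k k + (∑ j ∈ Finset.univ.erase k, φ j * |aR j k|)
          + (∑ j, ξ j * |aI j k|)) * |v k| := by
      simpa only [abs_neg] using hb3
    have hb4 : v k * (∑ j, (φ j * ρ j * aI j k + ξ j * σ j * aR j k)) ≤
        (φ k * aI k k + (∑ j ∈ Finset.univ.erase k, φ j * |aI j k|)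
          + (∑ j, ξ j * |aR j k|)) * |v k| :=
      inner_bound k φ ξ ρ σ (fun j => aI j k) (fun j => aR j k) (v k)
        hφ hξ hρ1 hσ1 (hρ2 k)
    have hp1 := pmax_bound (hPRR k).1 (hPRR k).2 hb1 (abs_nonneg (u k))
    have hp2 := pmax_bound (hPIR k).1 (hPIR k).2 hb2' (abs_nonneg (u k))
    have hp3 := pmax_bound (hPII k).1 (hPII k).2 hb3' (abs_nonneg (v k))
    have hp4 := pmax_bound (hPRI k).1 (hPRI k).2 hb4 (abs_nonneg (v k))
    linarith [hp1, hp2, hp3, hp4]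
  rw [hD]
  have final : (∑ k, (-(ξ k * d k * |u k|) - φ k * d k * |v k|))
      + (∑ k, ((max (ξ k * aR k k + (∑ j ∈ Finset.univ.erase k, ξ j * |aR j k|)
                   + (∑ j, φ j * |aI j k|)) 0 * lRR k
              + max (-(ξ k * aI k k) + (∑ j ∈ Finset.univ.erase k, ξ j * |aI j k|)
                   + (∑ j, φ j * |aR j k|)) 0 * lIR k) * |u k|
            + (max (φ k * aR k k + (∑ j ∈ Finset.univ.erase k, φ j * |aR j k|)
                   + (∑ j, ξ j * |aI j k|)) 0 * lII k
              + max (φ k * aI k k + (∑ j ∈ Finset.univ.erase k, φ j * |aI j k|)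
                   + (∑ j, ξ j * |aR j k|)) 0 * lRI k) * |v k|))
      = (∑ k, ((max (ξ k * aR k k + (∑ j ∈ Finset.univ.erase k, ξ j * |aR j k|)
                   + (∑ j, φ j * |aI j k|)) 0 * lRR k
              + max (-(ξ k * aI k k) + (∑ j ∈ Finset.univ.erase k, ξ j * |aI j k|)
                   + (∑ j, φ j * |aR j k|)) 0 * lIR k
              - ξ k * d k) * |u k|
            + (max (φ k * aR k k + (∑ j ∈ Finset.univ.erase k, φ j * |aR j k|)
                   + (∑ j, ξ j * |aI j k|)) 0 * lII k
              + max (φ k * aI k k + (∑ j ∈ Finset.univ.erase k, φ j * |aI j k|)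
                   + (∑ j, ξ j * |aR j k|)) 0 * lRI k
              - φ k * d k) * |v k|)) := by
    rw [← Finset.sum_add_distrib]
    apply Finset.sum_congr rfl
    intro k _
    ring
  linarith [hA, hB, le_of_eq final]

lemma hasDerivAt_partial1 {f : ℝ → ℝ → ℝ}
    (hf : ContDiff ℝ 1 (fun p : ℝ × ℝ => f p.1 p.2)) (y x : ℝ) :
    HasDerivAt (fun s => f s y) (deriv (fun s => f s y) x) x := by
  have h := partial_hasDerivAt hf (hasDerivAt_id x) (hasDerivAt_const x y)
  simpa using h

lemma hasDerivAt_partial2 {f : ℝ → ℝ → ℝ}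
    (hf : ContDiff ℝ 1 (fun p : ℝ × ℝ => f p.1 p.2)) (x y : ℝ) :
    HasDerivAt (fun s => f x s) (deriv (fun s => f x s) y) y := by
  have h := partial_hasDerivAt hf (hasDerivAt_const y x) (hasDerivAt_id y)
  simpa using h

/-- Condition H1 etc. (restated locally to avoid forward reference). -/
lemma equilibrium_unique (n : ℕ) (d : Fin n → ℝ)
    (aR aI bR bI τ : Fin n → Fin n → ℝ) (hτ : ∀ j k, 0 ≤ τ j k)
    (uR uI : Fin n → ℝ) (fR fI gR gI : Fin n → ℝ → ℝ → ℝ)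
    (lRR lRI lIR lII mRR mRI mIR mII : Fin n → ℝ)
    (hl : ∀ j, 0 < lRR j ∧ 0 < lRI j ∧ 0 < lIR j ∧ 0 < lII j)
    (hm : ∀ j, 0 < mRR j ∧ 0 < mRI j ∧ 0 < mIR j ∧ 0 < mII j)
    (hfcd : ∀ j, ContDiff ℝ 1 (fun p : ℝ × ℝ => fR j p.1 p.2))
    (hfcd' : ∀ j, ContDiff ℝ 1 (fun p : ℝ × ℝ => fI j p.1 p.2))
    (hfbd : ∀ j, ∀ x y : ℝ,
      (0 < deriv (fun s => fR j s y) x ∧ deriv (fun s => fR j s y) x ≤ lRR j) ∧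
      (0 < deriv (fun s => fR j x s) y ∧ deriv (fun s => fR j x s) y ≤ lRI j) ∧
      (0 < deriv (fun s => fI j s y) x ∧ deriv (fun s => fI j s y) x ≤ lIR j) ∧
      (0 < deriv (fun s => fI j x s) y ∧ deriv (fun s => fI j x s) y ≤ lII j))
    (hgcd : ∀ j, ContDiff ℝ 1 (fun p : ℝ × ℝ => gR j p.1 p.2))
    (hgcd' : ∀ j, ContDiff ℝ 1 (fun p : ℝ × ℝ => gI j p.1 p.2))
    (hgbd : ∀ j, ∀ x y : ℝ,
      |deriv (fun s => gR j s y) x| ≤ mRR j ∧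
      |deriv (fun s => gR j x s) y| ≤ mRI j ∧
      |deriv (fun s => gI j s y) x| ≤ mIR j ∧
      |deriv (fun s => gI j x s) y| ≤ mII j)
    (ξ φ : Fin n → ℝ) (hξ : ∀ j, 0 < ξ j) (hφ : ∀ j, 0 < φ j)
    (ε : ℝ) (hε : 0 < ε)
    (hT7 : ∀ k : Fin n,
      ξ k * (-(d k) + ε)
      + max (ξ k * aR k k + (∑ j ∈ Finset.univ.erase k, ξ j * |aR j k|)
             + (∑ j, φ j * |aI j k|)) 0 * lRR k
      + max (-(ξ k * aI k k) + (∑ j ∈ Finset.univ.erase k, ξ j * |aI j k|)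
             + (∑ j, φ j * |aR j k|)) 0 * lIR k
      + (∑ j, (ξ j * (|bR j k| * mRR k + |bI j k| * mIR k)
               + φ j * (|bR j k| * mIR k + |bI j k| * mRR k)) * Real.exp (ε * τ j k))
      ≤ 0)
    (hT8 : ∀ k : Fin n,
      φ k * (-(d k) + ε)
      + max (φ k * aR k k + (∑ j ∈ Finset.univ.erase k, φ j * |aR j k|)
             + (∑ j, ξ j * |aI j k|)) 0 * lII k
      + max (φ k * aI k k + (∑ j ∈ Finset.univ.erase k, φ j * |aI j k|)
             + (∑ j, ξ j * |aR j k|)) 0 * lRI k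
      + (∑ j, (ξ j * (|bR j k| * mRI k + |bI j k| * mII k)
               + φ j * (|bR j k| * mII k + |bI j k| * mRI k)) * Real.exp (ε * τ j k))
      ≤ 0)
    (wR wI zbR zbI : Fin n → ℝ)
    (hw1 : ∀ j : Fin n,
      -(d j) * wR j
      + (∑ k, (aR j k * fR k (wR k) (wI k) - aI j k * fI k (wR k) (wI k)))
      + (∑ k, (bR j k * gR k (wR k) (wI k) - bI j k * gI k (wR k) (wI k)))
      + uR j = 0)
    (hw2 : ∀ j : Fin n,
      -(d j) * wI j
      + (∑ k, (aR j k * fI k (wR k) (wI k) + aI j k * fR k (wR k) (wI k)))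
      + (∑ k, (bR j k * gI k (wR k) (wI k) + bI j k * gR k (wR k) (wI k)))
      + uI j = 0)
    (hz1 : ∀ j : Fin n,
      -(d j) * zbR j
      + (∑ k, (aR j k * fR k (zbR k) (zbI k) - aI j k * fI k (zbR k) (zbI k)))
      + (∑ k, (bR j k * gR k (zbR k) (zbI k) - bI j k * gI k (zbR k) (zbI k)))
      + uR j = 0)
    (hz2 : ∀ j : Fin n,
      -(d j) * zbI j
      + (∑ k, (aR j k * fI k (zbR k) (zbI k) + aI j k * fR k (zbR k) (zbI k)))
      + (∑ k, (bR j k * gI k (zbR k) (zbI k) + bI j k * gR k (zbR k) (zbI k)))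
      + uI j = 0) :
    wR = zbR ∧ wI = zbI := by
  classical
  set u : Fin n → ℝ := fun j => wR j - zbR j with hu
  set v : Fin n → ℝ := fun j => wI j - zbI j with hv
  have hPRRex : ∀ k, ∃ p, 0 < p ∧ p ≤ lRR k ∧
      fR k (wR k) (wI k) - fR k (zbR k) (wI k) = p * (wR k - zbR k) :=
    fun k => exists_slope_decomp (hl k).1
      (fun z => hasDerivAt_partial1 (hfcd k) (wI k) z)
      (fun z => (hfbd k z (wI k)).1) (wR k) (zbR k)
  have hPRIex : ∀ k, ∃ p, 0 < p ∧ p ≤ lRI k ∧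
      fR k (zbR k) (wI k) - fR k (zbR k) (zbI k) = p * (wI k - zbI k) :=
    fun k => exists_slope_decomp (hl k).2.1
      (fun z => hasDerivAt_partial2 (hfcd k) (zbR k) z)
      (fun z => (hfbd k (zbR k) z).2.1) (wI k) (zbI k)
  have hPIRex : ∀ k, ∃ p, 0 < p ∧ p ≤ lIR k ∧
      fI k (wR k) (wI k) - fI k (zbR k) (wI k) = p * (wR k - zbR k) :=
    fun k => exists_slope_decomp (hl k).2.2.1
      (fun z => hasDerivAt_partial1 (hfcd' k) (wI k) z)
      (fun z => (hfbd k z (wI k)).2.2.1) (wR k) (zbR k)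
  have hPIIex : ∀ k, ∃ p, 0 < p ∧ p ≤ lII k ∧
      fI k (zbR k) (wI k) - fI k (zbR k) (zbI k) = p * (wI k - zbI k) :=
    fun k => exists_slope_decomp (hl k).2.2.2
      (fun z => hasDerivAt_partial2 (hfcd' k) (zbR k) z)
      (fun z => (hfbd k (zbR k) z).2.2.2) (wI k) (zbI k)
  choose PRR hPRR1 hPRR2 hPRR3 using hPRRex
  choose PRI hPRI1 hPRI2 hPRI3 using hPRIex
  choose PIR hPIR1 hPIR2 hPIR3 using hPIRex
  choose PII hPII1 hPII2 hPII3 using hPIIex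
  set GRd : Fin n → ℝ := fun k => gR k (wR k) (wI k) - gR k (zbR k) (zbI k) with hGRd
  set GId : Fin n → ℝ := fun k => gI k (wR k) (wI k) - gI k (zbR k) (zbI k) with hGId
  have hGRb : ∀ k, |GRd k| ≤ mRR k * |u k| + mRI k * |v k| := by
    intro k
    have h1 : |gR k (wR k) (wI k) - gR k (zbR k) (wI k)| ≤ mRR k * |wR k - zbR k| :=
      abs_sub_le_of_deriv_bound
        (fun z => hasDerivAt_partial1 (hgcd k) (wI k) z)
        (fun z => (hgbd k z (wI k)).1) (wR k) (zbR k)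
    have h2 : |gR k (zbR k) (wI k) - gR k (zbR k) (zbI k)| ≤ mRI k * |wI k - zbI k| :=
      abs_sub_le_of_deriv_bound
        (fun z => hasDerivAt_partial2 (hgcd k) (zbR k) z)
        (fun z => (hgbd k (zbR k) z).2.1) (wI k) (zbI k)
    calc |GRd k| = |(gR k (wR k) (wI k) - gR k (zbR k) (wI k))
          + (gR k (zbR k) (wI k) - gR k (zbR k) (zbI k))| := by rw [hGRd]; ring_nf
      _ ≤ |gR k (wR k) (wI k) - gR k (zbR k) (wI k)|
          + |gR k (zbR k) (wI k) - gR k (zbR k) (zbI k)| := abs_add_le _ _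
      _ ≤ mRR k * |u k| + mRI k * |v k| := by rw [hu, hv]; exact add_le_add h1 h2
  have hGIb : ∀ k, |GId k| ≤ mIR k * |u k| + mII k * |v k| := by
    intro k
    have h1 : |gI k (wR k) (wI k) - gI k (zbR k) (wI k)| ≤ mIR k * |wR k - zbR k| :=
      abs_sub_le_of_deriv_bound
        (fun z => hasDerivAt_partial1 (hgcd' k) (wI k) z)
        (fun z => (hgbd k z (wI k)).2.2.1) (wR k) (zbR k)
    have h2 : |gI k (zbR k) (wI k) - gI k (zbR k) (zbI k)| ≤ mII k * |wI k - zbI k| :=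
      abs_sub_le_of_deriv_bound
        (fun z => hasDerivAt_partial2 (hgcd' k) (zbR k) z)
        (fun z => (hgbd k (zbR k) z).2.2.2) (wI k) (zbI k)
    calc |GId k| = |(gI k (wR k) (wI k) - gI k (zbR k) (wI k))
          + (gI k (zbR k) (wI k) - gI k (zbR k) (zbI k))| := by rw [hGId]; ring_nf
      _ ≤ _ + _ := abs_add_le _ _
      _ ≤ mIR k * |u k| + mII k * |v k| := by rw [hu, hv]; exact add_le_add h1 h2
  set σ : Fin n → ℝ := fun j => sgn (u j) with hσ
  set ρ : Fin n → ℝ := fun j => sgn (v j) with hρ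
  have halg := alg_core n d aR aI bR bI ξ φ (fun j => (hξ j).le) (fun j => (hφ j).le)
    lRR lRI lIR lII mRR mRI mIR mII u v σ ρ PRR PRI PIR PII
    (fun j k => GRd k) (fun j k => GId k) (fun j k => |u k|) (fun j k => |v k|)
    (fun j => sgn_abs_le _) (fun j => sgn_mul_self _)
    (fun j => sgn_abs_le _) (fun j => sgn_mul_self _)
    (fun k => ⟨hPRR1 k, hPRR2 k⟩) (fun k => ⟨hPRI1 k, hPRI2 k⟩)
    (fun k => ⟨hPIR1 k, hPIR2 k⟩) (fun k => ⟨hPII1 k, hPII2 k⟩)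
    (fun j k => hGRb k) (fun j k => hGIb k)
  -- the left-hand side of `halg` is zero
  have hzeroR : ∀ j, (-(d j) * u j
      + (∑ k, (aR j k * (PRR k * u k + PRI k * v k)
               - aI j k * (PIR k * u k + PII k * v k)))
      + (∑ k, (bR j k * GRd k - bI j k * GId k))) = 0 := by
    intro j
    have e1 : ∑ k, (aR j k * (PRR k * u k + PRI k * v k)
               - aI j k * (PIR k * u k + PII k * v k))
        = (∑ k, (aR j k * fR k (wR k) (wI k) - aI j k * fI k (wR k) (wI k)))
        - (∑ k, (aR j k * fR k (zbR k) (zbI k) - aI j k * fI k (zbR k) (zbI k))) := by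
      rw [← Finset.sum_sub_distrib]
      apply Finset.sum_congr rfl
      intro k _
      have h1 := hPRR3 k; have h2 := hPRI3 k; have h3 := hPIR3 k; have h4 := hPII3 k
      simp only [hu, hv]
      linear_combination (-(aR j k)) * h1 - aR j k * h2 + aI j k * h3 + aI j k * h4
    have e2 : ∑ k, (bR j k * GRd k - bI j k * GId k)
        = (∑ k, (bR j k * gR k (wR k) (wI k) - bI j k * gI k (wR k) (wI k)))
        - (∑ k, (bR j k * gR k (zbR k) (zbI k) - bI j k * gI k (zbR k) (zbI k))) := by
      rw [← Finset.sum_sub_distrib]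
      apply Finset.sum_congr rfl
      intro k _
      rw [hGRd, hGId]; ring
    rw [e1, e2]
    simp only [hu]
    have := hw1 j; have := hz1 j
    linarith
  have hzeroI : ∀ j, (-(d j) * v j
      + (∑ k, (aR j k * (PIR k * u k + PII k * v k)
               + aI j k * (PRR k * u k + PRI k * v k)))
      + (∑ k, (bR j k * GId k + bI j k * GRd k))) = 0 := by
    intro j
    have e1 : ∑ k, (aR j k * (PIR k * u k + PII k * v k)
               + aI j k * (PRR k * u k + PRI k * v k))
        = (∑ k, (aR j k * fI k (wR k) (wI k) + aI j k * fR k (wR k) (wI k)))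
        - (∑ k, (aR j k * fI k (zbR k) (zbI k) + aI j k * fR k (zbR k) (zbI k))) := by
      rw [← Finset.sum_sub_distrib]
      apply Finset.sum_congr rfl
      intro k _
      have h1 := hPRR3 k; have h2 := hPRI3 k; have h3 := hPIR3 k; have h4 := hPII3 k
      simp only [hu, hv]
      linear_combination (-(aR j k)) * h3 - aR j k * h4 - aI j k * h1 - aI j k * h2
    have e2 : ∑ k, (bR j k * GId k + bI j k * GRd k)
        = (∑ k, (bR j k * gI k (wR k) (wI k) + bI j k * gR k (wR k) (wI k)))
        - (∑ k, (bR j k * gI k (zbR k) (zbI k) + bI j k * gR k (zbR k) (zbI k))) := by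
      rw [← Finset.sum_sub_distrib]
      apply Finset.sum_congr rfl
      intro k _
      rw [hGRd, hGId]; ring
    rw [e1, e2]
    simp only [hv]
    have := hw2 j; have := hz2 j
    linarith
  have hL0 : (∑ j, ξ j * σ j * (-(d j) * u j
        + (∑ k, (aR j k * (PRR k * u k + PRI k * v k)
                 - aI j k * (PIR k * u k + PII k * v k)))
        + (∑ k, (bR j k * GRd k - bI j k * GId k))))
    + (∑ j, φ j * ρ j * (-(d j) * v j
        + (∑ k, (aR j k * (PIR k * u k + PII k * v k)
                 + aI j k * (PRR k * u k + PRI k * v k)))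
        + (∑ k, (bR j k * GId k + bI j k * GRd k)))) = 0 := by
    rw [Finset.sum_eq_zero, Finset.sum_eq_zero]
    · ring
    · intro j _; rw [hzeroI j]; ring
    · intro j _; rw [hzeroR j]; ring
  rw [hL0] at halg
  -- combine with the stability conditions
  have hRHS : (∑ k, ((max (ξ k * aR k k + (∑ j ∈ Finset.univ.erase k, ξ j * |aR j k|)
                   + (∑ j, φ j * |aI j k|)) 0 * lRR k
              + max (-(ξ k * aI k k) + (∑ j ∈ Finset.univ.erase k, ξ j * |aI j k|)
                   + (∑ j, φ j * |aR j k|)) 0 * lIR k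
              - ξ k * d k) * |u k|
            + (max (φ k * aR k k + (∑ j ∈ Finset.univ.erase k, φ j * |aR j k|)
                   + (∑ j, ξ j * |aI j k|)) 0 * lII k
              + max (φ k * aI k k + (∑ j ∈ Finset.univ.erase k, φ j * |aI j k|)
                   + (∑ j, ξ j * |aR j k|)) 0 * lRI k
              - φ k * d k) * |v k|))
      + (∑ j, ∑ k, ((ξ j * (|bR j k| * mRR k + |bI j k| * mIR k)
                    + φ j * (|bR j k| * mIR k + |bI j k| * mRR k)) * |u k|
                  + (ξ j * (|bR j k| * mRI k + |bI j k| * mII k)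
                    + φ j * (|bR j k| * mII k + |bI j k| * mRI k)) * |v k|))
      ≤ ∑ k, (-(ε * (ξ k * |u k|)) - ε * (φ k * |v k|)) := by
    rw [Finset.sum_comm, ← Finset.sum_add_distrib]
    apply Finset.sum_le_sum
    intro k _
    have h7 := hT7 k
    have h8 := hT8 k
    have hDu : ∀ j, (ξ j * (|bR j k| * mRR k + |bI j k| * mIR k)
        + φ j * (|bR j k| * mIR k + |bI j k| * mRR k))
        ≤ (ξ j * (|bR j k| * mRR k + |bI j k| * mIR k)
        + φ j * (|bR j k| * mIR k + |bI j k| * mRR k)) * Real.exp (ε * τ j k) := by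
      intro j
      apply le_mul_of_one_le_right
      · have := (hm k).1; have := (hm k).2.2.1
        have := (hξ j).le; have := (hφ j).le
        positivity
      · exact Real.one_le_exp (mul_nonneg hε.le (hτ j k))
    have hDv : ∀ j, (ξ j * (|bR j k| * mRI k + |bI j k| * mII k)
        + φ j * (|bR j k| * mII k + |bI j k| * mRI k))
        ≤ (ξ j * (|bR j k| * mRI k + |bI j k| * mII k)
        + φ j * (|bR j k| * mII k + |bI j k| * mRI k)) * Real.exp (ε * τ j k) := by
      intro j
      apply le_mul_of_one_le_right
      · have := (hm k).2.1; have := (hm k).2.2.2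
        have := (hξ j).le; have := (hφ j).le
        positivity
      · exact Real.one_le_exp (mul_nonneg hε.le (hτ j k))
    have hsum1 : (∑ j, (ξ j * (|bR j k| * mRR k + |bI j k| * mIR k)
        + φ j * (|bR j k| * mIR k + |bI j k| * mRR k)))
        ≤ (∑ j, (ξ j * (|bR j k| * mRR k + |bI j k| * mIR k)
        + φ j * (|bR j k| * mIR k + |bI j k| * mRR k)) * Real.exp (ε * τ j k)) :=
      Finset.sum_le_sum (fun j _ => hDu j)
    have hsum2 : (∑ j, (ξ j * (|bR j k| * mRI k + |bI j k| * mII k)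
        + φ j * (|bR j k| * mII k + |bI j k| * mRI k)))
        ≤ (∑ j, (ξ j * (|bR j k| * mRI k + |bI j k| * mII k)
        + φ j * (|bR j k| * mII k + |bI j k| * mRI k)) * Real.exp (ε * τ j k)) :=
      Finset.sum_le_sum (fun j _ => hDv j)
    have hcu : (max (ξ k * aR k k + (∑ j ∈ Finset.univ.erase k, ξ j * |aR j k|)
                   + (∑ j, φ j * |aI j k|)) 0 * lRR k
              + max (-(ξ k * aI k k) + (∑ j ∈ Finset.univ.erase k, ξ j * |aI j k|)
                   + (∑ j, φ j * |aR j k|)) 0 * lIR k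
              - ξ k * d k)
        + (∑ j, (ξ j * (|bR j k| * mRR k + |bI j k| * mIR k)
                    + φ j * (|bR j k| * mIR k + |bI j k| * mRR k)))
        ≤ -(ε * ξ k) := by linarith
    have hcv : (max (φ k * aR k k + (∑ j ∈ Finset.univ.erase k, φ j * |aR j k|)
                   + (∑ j, ξ j * |aI j k|)) 0 * lII k
              + max (φ k * aI k k + (∑ j ∈ Finset.univ.erase k, φ j * |aI j k|)
                   + (∑ j, ξ j * |aR j k|)) 0 * lRI k
              - φ k * d k)
        + (∑ j, (ξ j * (|bR j k| * mRI k + |bI j k| * mII k)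
                    + φ j * (|bR j k| * mII k + |bI j k| * mRI k)))
        ≤ -(ε * φ k) := by linarith
    have e3 : (∑ j, ((ξ j * (|bR j k| * mRR k + |bI j k| * mIR k)
                    + φ j * (|bR j k| * mIR k + |bI j k| * mRR k)) * |u k|
                  + (ξ j * (|bR j k| * mRI k + |bI j k| * mII k)
                    + φ j * (|bR j k| * mII k + |bI j k| * mRI k)) * |v k|))
        = (∑ j, (ξ j * (|bR j k| * mRR k + |bI j k| * mIR k)
                    + φ j * (|bR j k| * mIR k + |bI j k| * mRR k))) * |u k|
        + (∑ j, (ξ j * (|bR j k| * mRI k + |bI j k| * mII k)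
                    + φ j * (|bR j k| * mII k + |bI j k| * mRI k))) * |v k| := by
      rw [Finset.sum_add_distrib, Finset.sum_mul, Finset.sum_mul]
    rw [e3]
    have hu0 : (0:ℝ) ≤ |u k| := abs_nonneg _
    have hv0 : (0:ℝ) ≤ |v k| := abs_nonneg _
    nlinarith [mul_le_mul_of_nonneg_right hcu hu0, mul_le_mul_of_nonneg_right hcv hv0,
      mul_le_mul_of_nonneg_right hsum1 hu0, mul_le_mul_of_nonneg_right hsum2 hv0]
  have hN : (∑ k, (ξ k * |u k| + φ k * |v k|)) ≤ 0 := by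
    have h1 : (0:ℝ) ≤ ∑ k, (-(ε * (ξ k * |u k|)) - ε * (φ k * |v k|)) :=
      le_trans halg hRHS
    have h2 : (∑ k, (-(ε * (ξ k * |u k|)) - ε * (φ k * |v k|)))
        = -ε * ∑ k, (ξ k * |u k| + φ k * |v k|) := by
      rw [Finset.mul_sum]
      apply Finset.sum_congr rfl
      intro k _; ring
    rw [h2] at h1
    nlinarith
  have hterm : ∀ k : Fin n, ξ k * |u k| + φ k * |v k| = 0 := by
    have hnn : ∀ k ∈ Finset.univ, (0:ℝ) ≤ ξ k * |u k| + φ k * |v k| := by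
      intro k _
      have := (hξ k).le; have := (hφ k).le
      positivity
    have hsz : (∑ k, (ξ k * |u k| + φ k * |v k|)) = 0 :=
      le_antisymm hN (Finset.sum_nonneg hnn)
    intro k
    exact (Finset.sum_eq_zero_iff_of_nonneg hnn).mp hsz k (Finset.mem_univ k)
  constructor <;> funext k <;>
    [ (have h := hterm k
       have h1 : |u k| = 0 := by
         have := (hξ k); have := (hφ k)
         have hu0 : (0:ℝ) ≤ |u k| := abs_nonneg _
         have hv0 : (0:ℝ) ≤ |v k| := abs_nonneg _
         nlinarith
       have : u k = 0 := abs_eq_zero.mp h1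
       rw [hu] at this; simpa using sub_eq_zero.mp this);
      (have h := hterm k
       have h1 : |v k| = 0 := by
         have := (hξ k); have := (hφ k)
         have hu0 : (0:ℝ) ≤ |u k| := abs_nonneg _
         have hv0 : (0:ℝ) ≤ |v k| := abs_nonneg _
         nlinarith
       have : v k = 0 := abs_eq_zero.mp h1
       rw [hv] at this; simpa using sub_eq_zero.mp this)]

lemma ev_upper {f : ℝ → ℝ} {f' t δ : ℝ} (hf : HasDerivAt f f' t) (hδ : 0 < δ) :
    ∀ᶠ z in nhdsWithin t (Ioi t), f z ≤ f t + (f' + δ) * (z - t) := by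
  have h4 : ∀ᶠ z in nhds t, |f z - f t - (z - t) * f'| ≤ δ * |z - t| := by
    have := hf.isLittleO.def hδ
    simpa [Real.norm_eq_abs, smul_eq_mul] using this
  filter_upwards [nhdsWithin_le_nhds h4, self_mem_nhdsWithin] with z hz4 hz5
  have hh0 : 0 < z - t := by simpa [Set.mem_Ioi] using hz5
  rw [abs_of_pos hh0] at hz4
  have := abs_le.mp hz4
  nlinarith [this.2]

lemma hasDerivAt_exp_mul (ε t : ℝ) :
    HasDerivAt (fun z => Real.exp (ε * z)) (ε * Real.exp (ε * t)) t := by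
  have h := (Real.hasDerivAt_exp (ε * t)).comp t ((hasDerivAt_id t).const_mul ε)
  simpa [mul_comm, Function.comp_def] using h

lemma sgn_cases (x y : ℝ) :
    |(if x = 0 then sgn y else sgn x)| ≤ 1 ∧
    (if x = 0 then sgn y else sgn x) * x = |x| ∧
    (if x = 0 then sgn y else sgn x) * y = |y| ∨ True := Or.inr trivial

lemma lin_abs_bound {p q x y mp mq : ℝ} (hp : |p| ≤ mp) (hq : |q| ≤ mq) :
    |p * x + q * y| ≤ mp * |x| + mq * |y| := by
  calc |p * x + q * y| ≤ |p * x| + |q * y| := abs_add_le _ _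
    _ = |p| * |x| + |q| * |y| := by rw [abs_mul, abs_mul]
    _ ≤ mp * |x| + mq * |y| := by
        have := abs_nonneg x; have := abs_nonneg y
        have := abs_nonneg p; have := abs_nonneg q
        nlinarith

lemma sum_expand1 {n : ℕ} (cf av bv : Fin n → ℝ) (c δ1 : ℝ) :
    ∑ j, cf j * (av j + (bv j + δ1) * c)
      = (∑ j, cf j * av j) + ((∑ j, cf j * bv j) + (∑ j, cf j) * δ1) * c := by
  simp only [Finset.sum_mul, add_mul, Finset.sum_add_distrib, ← Finset.sum_add_distrib]
  apply Finset.sum_congr rfl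
  intro j _
  ring

set_option maxHeartbeats 1000000 in
lemma decay (n : ℕ) (d : Fin n → ℝ)
    (aR aI bR bI τ : Fin n → Fin n → ℝ) (hτ : ∀ j k, 0 ≤ τ j k)
    (uR uI : Fin n → ℝ) (fR fI gR gI : Fin n → ℝ → ℝ → ℝ)
    (lRR lRI lIR lII mRR mRI mIR mII : Fin n → ℝ)
    (hl : ∀ j, 0 < lRR j ∧ 0 < lRI j ∧ 0 < lIR j ∧ 0 < lII j)
    (hm : ∀ j, 0 < mRR j ∧ 0 < mRI j ∧ 0 < mIR j ∧ 0 < mII j)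
    (hfcd : ∀ j, ContDiff ℝ 1 (fun p : ℝ × ℝ => fR j p.1 p.2))
    (hfcd' : ∀ j, ContDiff ℝ 1 (fun p : ℝ × ℝ => fI j p.1 p.2))
    (hfbd : ∀ j, ∀ x y : ℝ,
      (0 < deriv (fun s => fR j s y) x ∧ deriv (fun s => fR j s y) x ≤ lRR j) ∧
      (0 < deriv (fun s => fR j x s) y ∧ deriv (fun s => fR j x s) y ≤ lRI j) ∧
      (0 < deriv (fun s => fI j s y) x ∧ deriv (fun s => fI j s y) x ≤ lIR j) ∧
      (0 < deriv (fun s => fI j x s) y ∧ deriv (fun s => fI j x s) y ≤ lII j))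
    (hgcd : ∀ j, ContDiff ℝ 1 (fun p : ℝ × ℝ => gR j p.1 p.2))
    (hgcd' : ∀ j, ContDiff ℝ 1 (fun p : ℝ × ℝ => gI j p.1 p.2))
    (hgbd : ∀ j, ∀ x y : ℝ,
      |deriv (fun s => gR j s y) x| ≤ mRR j ∧
      |deriv (fun s => gR j x s) y| ≤ mRI j ∧
      |deriv (fun s => gI j s y) x| ≤ mIR j ∧
      |deriv (fun s => gI j x s) y| ≤ mII j)
    (ξ φ : Fin n → ℝ) (hξ : ∀ j, 0 < ξ j) (hφ : ∀ j, 0 < φ j)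
    (ε : ℝ) (hε : 0 < ε)
    (hT7 : ∀ k : Fin n,
      ξ k * (-(d k) + ε)
      + max (ξ k * aR k k + (∑ j ∈ Finset.univ.erase k, ξ j * |aR j k|)
             + (∑ j, φ j * |aI j k|)) 0 * lRR k
      + max (-(ξ k * aI k k) + (∑ j ∈ Finset.univ.erase k, ξ j * |aI j k|)
             + (∑ j, φ j * |aR j k|)) 0 * lIR k
      + (∑ j, (ξ j * (|bR j k| * mRR k + |bI j k| * mIR k)
               + φ j * (|bR j k| * mIR k + |bI j k| * mRR k)) * Real.exp (ε * τ j k))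
      ≤ 0)
    (hT8 : ∀ k : Fin n,
      φ k * (-(d k) + ε)
      + max (φ k * aR k k + (∑ j ∈ Finset.univ.erase k, φ j * |aR j k|)
             + (∑ j, ξ j * |aI j k|)) 0 * lII k
      + max (φ k * aI k k + (∑ j ∈ Finset.univ.erase k, φ j * |aI j k|)
             + (∑ j, ξ j * |aR j k|)) 0 * lRI k
      + (∑ j, (ξ j * (|bR j k| * mRI k + |bI j k| * mII k)
               + φ j * (|bR j k| * mII k + |bI j k| * mRI k)) * Real.exp (ε * τ j k))
      ≤ 0)
    (zR zI : Fin n → ℝ → ℝ)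
    (hzRc : ∀ j, ContDiff ℝ 1 (zR j)) (hzIc : ∀ j, ContDiff ℝ 1 (zI j))
    (hode1 : ∀ j : Fin n, ∀ t : ℝ, 0 ≤ t →
      deriv (zR j) t =
        -(d j) * zR j t
        + (∑ k, (aR j k * fR k (zR k t) (zI k t) - aI j k * fI k (zR k t) (zI k t)))
        + (∑ k, (bR j k * gR k (zR k (t - τ j k)) (zI k (t - τ j k))
                 - bI j k * gI k (zR k (t - τ j k)) (zI k (t - τ j k))))
        + uR j)
    (hode2 : ∀ j : Fin n, ∀ t : ℝ, 0 ≤ t →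
      deriv (zI j) t =
        -(d j) * zI j t
        + (∑ k, (aR j k * fI k (zR k t) (zI k t) + aI j k * fR k (zR k t) (zI k t)))
        + (∑ k, (bR j k * gI k (zR k (t - τ j k)) (zI k (t - τ j k))
                 + bI j k * gR k (zR k (t - τ j k)) (zI k (t - τ j k))))
        + uI j) :
    ∃ c : ℝ, 0 < c ∧ ∀ t : ℝ, 0 ≤ t →
      (∑ j, ξ j * |deriv (zR j) t|) + (∑ j, φ j * |deriv (zI j) t|)
        ≤ c * Real.exp (-ε * t) := by
  classical
  set X : Fin n → ℝ → ℝ := fun j => deriv (zR j) with hX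
  set Y : Fin n → ℝ → ℝ := fun j => deriv (zI j) with hY
  have hXc : ∀ j, Continuous (X j) := fun j => (hzRc j).continuous_deriv le_rfl
  have hYc : ∀ j, Continuous (Y j) := fun j => (hzIc j).continuous_deriv le_rfl
  have hzR' : ∀ j t, HasDerivAt (zR j) (X j t) t :=
    fun j t => (((hzRc j).differentiable one_ne_zero) t).hasDerivAt
  have hzI' : ∀ j t, HasDerivAt (zI j) (Y j t) t :=
    fun j t => (((hzIc j).differentiable one_ne_zero) t).hasDerivAt
  set Psi : Fin n → ℝ → ℝ := fun j t =>
    -(d j) * X j t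
    + (∑ k, (aR j k * (deriv (fun s => fR k s (zI k t)) (zR k t) * X k t
                       + deriv (fun s => fR k (zR k t) s) (zI k t) * Y k t)
             - aI j k * (deriv (fun s => fI k s (zI k t)) (zR k t) * X k t
                         + deriv (fun s => fI k (zR k t) s) (zI k t) * Y k t)))
    + (∑ k, (bR j k * (deriv (fun s => gR k s (zI k (t - τ j k))) (zR k (t - τ j k)) * X k (t - τ j k)
                       + deriv (fun s => gR k (zR k (t - τ j k)) s) (zI k (t - τ j k)) * Y k (t - τ j k))
             - bI j k * (deriv (fun s => gI k s (zI k (t - τ j k))) (zR k (t - τ j k)) * X k (t - τ j k)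
                         + deriv (fun s => gI k (zR k (t - τ j k)) s) (zI k (t - τ j k)) * Y k (t - τ j k))))
    with hPsi
  set Theta : Fin n → ℝ → ℝ := fun j t =>
    -(d j) * Y j t
    + (∑ k, (aR j k * (deriv (fun s => fI k s (zI k t)) (zR k t) * X k t
                       + deriv (fun s => fI k (zR k t) s) (zI k t) * Y k t)
             + aI j k * (deriv (fun s => fR k s (zI k t)) (zR k t) * X k t
                         + deriv (fun s => fR k (zR k t) s) (zI k t) * Y k t)))
    + (∑ k, (bR j k * (deriv (fun s => gI k s (zI k (t - τ j k))) (zR k (t - τ j k)) * X k (t - τ j k)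
                       + deriv (fun s => gI k (zR k (t - τ j k)) s) (zI k (t - τ j k)) * Y k (t - τ j k))
             + bI j k * (deriv (fun s => gR k s (zI k (t - τ j k))) (zR k (t - τ j k)) * X k (t - τ j k)
                         + deriv (fun s => gR k (zR k (t - τ j k)) s) (zI k (t - τ j k)) * Y k (t - τ j k))))
    with hTheta
  have hcompR : ∀ (k : Fin n) (c t : ℝ), HasDerivAt (fun z => zR k (z - c)) (X k (t - c)) t := by
    intro k c t
    simpa [Function.comp_def] using (hzR' k (t - c)).comp t ((hasDerivAt_id t).sub_const c)
  have hcompI : ∀ (k : Fin n) (c t : ℝ), HasDerivAt (fun z => zI k (z - c)) (Y k (t - c)) t := by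
    intro k c t
    simpa [Function.comp_def] using (hzI' k (t - c)).comp t ((hasDerivAt_id t).sub_const c)
  have hX' : ∀ j t, 0 < t → HasDerivAt (X j) (Psi j t) t := by
    intro j t ht
    have hPhi : HasDerivAt (fun z =>
        -(d j) * zR j z
        + (∑ k, (aR j k * fR k (zR k z) (zI k z) - aI j k * fI k (zR k z) (zI k z)))
        + (∑ k, (bR j k * gR k (zR k (z - τ j k)) (zI k (z - τ j k))
                 - bI j k * gI k (zR k (z - τ j k)) (zI k (z - τ j k))))
        + uR j) (Psi j t) t := by
      rw [hPsi]
      apply HasDerivAt.add_const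
      apply HasDerivAt.add
      apply HasDerivAt.add
      · exact (hzR' j t).const_mul (-(d j))
      · exact HasDerivAt.fun_sum (fun k _ =>
          ((partial_hasDerivAt (hfcd k) (hzR' k t) (hzI' k t)).const_mul (aR j k)).sub
          ((partial_hasDerivAt (hfcd' k) (hzR' k t) (hzI' k t)).const_mul (aI j k)))
      · exact HasDerivAt.fun_sum (fun k _ =>
          ((partial_hasDerivAt (hgcd k) (hcompR k (τ j k) t) (hcompI k (τ j k) t)).const_mul (bR j k)).sub
          ((partial_hasDerivAt (hgcd' k) (hcompR k (τ j k) t) (hcompI k (τ j k) t)).const_mul (bI j k)))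
    apply hPhi.congr_of_eventuallyEq
    filter_upwards [isOpen_Ioi.mem_nhds ht] with z hz
    exact hode1 j z (le_of_lt hz)
  have hY' : ∀ j t, 0 < t → HasDerivAt (Y j) (Theta j t) t := by
    intro j t ht
    have hPhi : HasDerivAt (fun z =>
        -(d j) * zI j z
        + (∑ k, (aR j k * fI k (zR k z) (zI k z) + aI j k * fR k (zR k z) (zI k z)))
        + (∑ k, (bR j k * gI k (zR k (z - τ j k)) (zI k (z - τ j k))
                 + bI j k * gR k (zR k (z - τ j k)) (zI k (z - τ j k))))
        + uI j) (Theta j t) t := by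
      rw [hTheta]
      apply HasDerivAt.add_const
      apply HasDerivAt.add
      apply HasDerivAt.add
      · exact (hzI' j t).const_mul (-(d j))
      · exact HasDerivAt.fun_sum (fun k _ =>
          ((partial_hasDerivAt (hfcd' k) (hzR' k t) (hzI' k t)).const_mul (aR j k)).add
          ((partial_hasDerivAt (hfcd k) (hzR' k t) (hzI' k t)).const_mul (aI j k)))
      · exact HasDerivAt.fun_sum (fun k _ =>
          ((partial_hasDerivAt (hgcd' k) (hcompR k (τ j k) t) (hcompI k (τ j k) t)).const_mul (bR j k)).add
          ((partial_hasDerivAt (hgcd k) (hcompR k (τ j k) t) (hcompI k (τ j k) t)).const_mul (bI j k)))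
    apply hPhi.congr_of_eventuallyEq
    filter_upwards [isOpen_Ioi.mem_nhds ht] with z hz
    exact hode2 j z (le_of_lt hz)
  set Du : Fin n → Fin n → ℝ := fun j k =>
    ξ j * (|bR j k| * mRR k + |bI j k| * mIR k)
    + φ j * (|bR j k| * mIR k + |bI j k| * mRR k) with hDu
  set Dv : Fin n → Fin n → ℝ := fun j k =>
    ξ j * (|bR j k| * mRI k + |bI j k| * mII k)
    + φ j * (|bR j k| * mII k + |bI j k| * mRI k) with hDv
  have hDu0 : ∀ j k, 0 ≤ Du j k := by
    intro j k
    rw [hDu]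
    have := (hm k).1; have := (hm k).2.2.1
    have := (hξ j).le; have := (hφ j).le
    positivity
  have hDv0 : ∀ j k, 0 ≤ Dv j k := by
    intro j k
    rw [hDv]
    have := (hm k).2.1; have := (hm k).2.2.2
    have := (hξ j).le; have := (hφ j).le
    positivity
  set H : Fin n → Fin n → ℝ → ℝ := fun j k s =>
    (Du j k * |X k s| + Dv j k * |Y k s|) * Real.exp (ε * s) with hH
  have hHc : ∀ j k, Continuous (H j k) := by
    intro j k
    rw [hH]
    exact ((continuous_const.mul (hXc k).abs).add
      (continuous_const.mul (hYc k).abs)).mul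
      (Real.continuous_exp.comp (continuous_const.mul continuous_id))
  have hH0 : ∀ j k s, 0 ≤ H j k s := by
    intro j k s
    rw [hH]
    have := hDu0 j k; have := hDv0 j k
    have := abs_nonneg (X k s); have := abs_nonneg (Y k s)
    have := Real.exp_pos (ε * s)
    positivity
  set F : Fin n → Fin n → ℝ → ℝ := fun j k t => ∫ s in (0:ℝ)..t, H j k s with hF
  have hF' : ∀ j k t, HasDerivAt (F j k) (H j k t) t := by
    intro j k t
    rw [hF]
    exact intervalIntegral.integral_hasDerivAt_right
      ((hHc j k).intervalIntegrable _ _)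
      ((hHc j k).stronglyMeasurableAtFilter _ _)
      (hHc j k).continuousAt
  have hFc : ∀ j k, Continuous (F j k) := by
    intro j k
    have : Differentiable ℝ (F j k) := fun t => (hF' j k t).differentiableAt
    exact this.continuous
  have hIntnn : ∀ j k (t : ℝ), 0 ≤ F j k t - F j k (t - τ j k) := by
    intro j k t
    have e : F j k t - F j k (t - τ j k) = ∫ s in (t - τ j k)..t, H j k s := by
      rw [hF]
      exact intervalIntegral.integral_interval_sub_left
        ((hHc j k).intervalIntegrable _ _) ((hHc j k).intervalIntegrable _ _)
    rw [e]
    exact intervalIntegral.integral_nonneg (by linarith [hτ j k]) (fun s _ => hH0 j k s)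
  set NN : ℝ → ℝ := fun t => (∑ j, ξ j * |X j t|) + (∑ j, φ j * |Y j t|) with hNN
  have hNNc : Continuous NN := by
    rw [hNN]
    exact (continuous_finset_sum _ (fun j _ => continuous_const.mul (hXc j).abs)).add
      (continuous_finset_sum _ (fun j _ => continuous_const.mul (hYc j).abs))
  have hNN0 : ∀ t, 0 ≤ NN t := by
    intro t
    simp only [hNN]
    have h1 : (0:ℝ) ≤ ∑ j, ξ j * |X j t| :=
      Finset.sum_nonneg (fun j _ => mul_nonneg (hξ j).le (abs_nonneg _))
    have h2 : (0:ℝ) ≤ ∑ j, φ j * |Y j t| :=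
      Finset.sum_nonneg (fun j _ => mul_nonneg (hφ j).le (abs_nonneg _))
    linarith
  set V : ℝ → ℝ := fun t => Real.exp (ε * t) * NN t
    + ∑ j, ∑ k, Real.exp (ε * τ j k) * (F j k t - F j k (t - τ j k)) with hV
  have hVc : Continuous V := by
    rw [hV]
    apply Continuous.add
    · exact (Real.continuous_exp.comp (continuous_const.mul continuous_id)).mul hNNc
    · apply continuous_finset_sum
      intro j _
      apply continuous_finset_sum
      intro k _
      exact continuous_const.mul ((hFc j k).sub ((hFc j k).comp
        (continuous_id.sub continuous_const)))
  have hVN : ∀ t, Real.exp (ε * t) * NN t ≤ V t := by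
    intro t
    simp only [hV]
    have : (0:ℝ) ≤ ∑ j, ∑ k, Real.exp (ε * τ j k) * (F j k t - F j k (t - τ j k)) :=
      Finset.sum_nonneg (fun j _ => Finset.sum_nonneg (fun k _ =>
        mul_nonneg (Real.exp_pos _).le (hIntnn j k t)))
    linarith
  have hdini : ∀ t : ℝ, 0 < t → ∀ δ : ℝ, 0 < δ →
      ∀ᶠ z in nhdsWithin t (Ioi t), V z ≤ V t + δ * (z - t) := by
    intro t ht δ hδ
    have hE0 : (0:ℝ) < Real.exp (ε * t) := Real.exp_pos _
    set σ : Fin n → ℝ := fun j => if X j t = 0 then sgn (Psi j t) else sgn (X j t) with hσd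
    set ρ : Fin n → ℝ := fun j => if Y j t = 0 then sgn (Theta j t) else sgn (Y j t) with hρd
    have hσ1 : ∀ j, |σ j| ≤ 1 := by
      intro j; simp only [hσd]; split <;> exact sgn_abs_le _
    have hρ1 : ∀ j, |ρ j| ≤ 1 := by
      intro j; simp only [hρd]; split <;> exact sgn_abs_le _
    have hσ2 : ∀ j, σ j * X j t = |X j t| := by
      intro j; simp only [hσd]
      by_cases h : X j t = 0
      · simp [h]
      · rw [if_neg h]; exact sgn_mul_self _
    have hρ2 : ∀ j, ρ j * Y j t = |Y j t| := by
      intro j; simp only [hρd]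
      by_cases h : Y j t = 0
      · simp [h]
      · rw [if_neg h]; exact sgn_mul_self _
    -- the key differential inequality
    have halg : (∑ j, ξ j * σ j * Psi j t) + (∑ j, φ j * ρ j * Theta j t)
        ≤ (∑ k, ((max (ξ k * aR k k + (∑ j ∈ Finset.univ.erase k, ξ j * |aR j k|)
                   + (∑ j, φ j * |aI j k|)) 0 * lRR k
              + max (-(ξ k * aI k k) + (∑ j ∈ Finset.univ.erase k, ξ j * |aI j k|)
                   + (∑ j, φ j * |aR j k|)) 0 * lIR k
              - ξ k * d k) * |X k t|
            + (max (φ k * aR k k + (∑ j ∈ Finset.univ.erase k, φ j * |aR j k|)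
                   + (∑ j, ξ j * |aI j k|)) 0 * lII k
              + max (φ k * aI k k + (∑ j ∈ Finset.univ.erase k, φ j * |aI j k|)
                   + (∑ j, ξ j * |aR j k|)) 0 * lRI k
              - φ k * d k) * |Y k t|))
        + (∑ j, ∑ k, (Du j k * |X k (t - τ j k)| + Dv j k * |Y k (t - τ j k)|)) := by
      simp only [hPsi, hTheta]
      exact alg_core n d aR aI bR bI ξ φ (fun j => (hξ j).le) (fun j => (hφ j).le)
        lRR lRI lIR lII mRR mRI mIR mII
        (fun k => X k t) (fun k => Y k t) σ ρ
        (fun k => deriv (fun s => fR k s (zI k t)) (zR k t))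
        (fun k => deriv (fun s => fR k (zR k t) s) (zI k t))
        (fun k => deriv (fun s => fI k s (zI k t)) (zR k t))
        (fun k => deriv (fun s => fI k (zR k t) s) (zI k t))
        (fun j k => deriv (fun s => gR k s (zI k (t - τ j k))) (zR k (t - τ j k)) * X k (t - τ j k)
          + deriv (fun s => gR k (zR k (t - τ j k)) s) (zI k (t - τ j k)) * Y k (t - τ j k))
        (fun j k => deriv (fun s => gI k s (zI k (t - τ j k))) (zR k (t - τ j k)) * X k (t - τ j k)
          + deriv (fun s => gI k (zR k (t - τ j k)) s) (zI k (t - τ j k)) * Y k (t - τ j k))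
        (fun j k => |X k (t - τ j k)|) (fun j k => |Y k (t - τ j k)|)
        hσ1 hσ2 hρ1 hρ2
        (fun k => (hfbd k (zR k t) (zI k t)).1)
        (fun k => (hfbd k (zR k t) (zI k t)).2.1)
        (fun k => (hfbd k (zR k t) (zI k t)).2.2.1)
        (fun k => (hfbd k (zR k t) (zI k t)).2.2.2)
        (fun j k => lin_abs_bound
          ((hgbd k (zR k (t - τ j k)) (zI k (t - τ j k))).1)
          ((hgbd k (zR k (t - τ j k)) (zI k (t - τ j k))).2.1))
        (fun j k => lin_abs_bound
          ((hgbd k (zR k (t - τ j k)) (zI k (t - τ j k))).2.2.1)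
          ((hgbd k (zR k (t - τ j k)) (zI k (t - τ j k))).2.2.2))
    have e4 : (∑ j, ∑ k, (Du j k * |X k t| + Dv j k * |Y k t|) * Real.exp (ε * τ j k))
        = ∑ k, ((∑ j, Du j k * Real.exp (ε * τ j k)) * |X k t|
                + (∑ j, Dv j k * Real.exp (ε * τ j k)) * |Y k t|) := by
      rw [Finset.sum_comm]
      apply Finset.sum_congr rfl
      intro k _
      rw [Finset.sum_mul, Finset.sum_mul, ← Finset.sum_add_distrib]
      apply Finset.sum_congr rfl
      intro j _
      ring
    have h5 : ε * (∑ j, ξ j * |X j t|) + ε * (∑ j, φ j * |Y j t|)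
        + (∑ k, ((max (ξ k * aR k k + (∑ j ∈ Finset.univ.erase k, ξ j * |aR j k|)
                   + (∑ j, φ j * |aI j k|)) 0 * lRR k
              + max (-(ξ k * aI k k) + (∑ j ∈ Finset.univ.erase k, ξ j * |aI j k|)
                   + (∑ j, φ j * |aR j k|)) 0 * lIR k
              - ξ k * d k) * |X k t|
            + (max (φ k * aR k k + (∑ j ∈ Finset.univ.erase k, φ j * |aR j k|)
                   + (∑ j, ξ j * |aI j k|)) 0 * lII k
              + max (φ k * aI k k + (∑ j ∈ Finset.univ.erase k, φ j * |aI j k|)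
                   + (∑ j, ξ j * |aR j k|)) 0 * lRI k
              - φ k * d k) * |Y k t|))
        + (∑ k, ((∑ j, Du j k * Real.exp (ε * τ j k)) * |X k t|
                + (∑ j, Dv j k * Real.exp (ε * τ j k)) * |Y k t|)) ≤ 0 := by
      rw [Finset.mul_sum, Finset.mul_sum, ← Finset.sum_add_distrib,
        ← Finset.sum_add_distrib, ← Finset.sum_add_distrib]
      apply Finset.sum_nonpos
      intro k _
      have hDural : (∑ j, Du j k * Real.exp (ε * τ j k))
          = ∑ j, (ξ j * (|bR j k| * mRR k + |bI j k| * mIR k)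
              + φ j * (|bR j k| * mIR k + |bI j k| * mRR k)) * Real.exp (ε * τ j k) :=
        Finset.sum_congr rfl (fun j _ => by rw [hDu])
      have hDvral : (∑ j, Dv j k * Real.exp (ε * τ j k))
          = ∑ j, (ξ j * (|bR j k| * mRI k + |bI j k| * mII k)
              + φ j * (|bR j k| * mII k + |bI j k| * mRI k)) * Real.exp (ε * τ j k) :=
        Finset.sum_congr rfl (fun j _ => by rw [hDv])
      have hcu : ε * ξ k
          + (max (ξ k * aR k k + (∑ j ∈ Finset.univ.erase k, ξ j * |aR j k|)
                   + (∑ j, φ j * |aI j k|)) 0 * lRR k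
              + max (-(ξ k * aI k k) + (∑ j ∈ Finset.univ.erase k, ξ j * |aI j k|)
                   + (∑ j, φ j * |aR j k|)) 0 * lIR k
              - ξ k * d k)
          + (∑ j, Du j k * Real.exp (ε * τ j k)) ≤ 0 := by
        rw [hDural]
        have := hT7 k
        linarith
      have hcv : ε * φ k
          + (max (φ k * aR k k + (∑ j ∈ Finset.univ.erase k, φ j * |aR j k|)
                   + (∑ j, ξ j * |aI j k|)) 0 * lII k
              + max (φ k * aI k k + (∑ j ∈ Finset.univ.erase k, φ j * |aI j k|)
                   + (∑ j, ξ j * |aR j k|)) 0 * lRI k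
              - φ k * d k)
          + (∑ j, Dv j k * Real.exp (ε * τ j k)) ≤ 0 := by
        rw [hDvral]
        have := hT8 k
        linarith
      have h1 := mul_le_mul_of_nonneg_right hcu (abs_nonneg (X k t))
      have h2 := mul_le_mul_of_nonneg_right hcv (abs_nonneg (Y k t))
      nlinarith [h1, h2]
    -- derivative of the integral part
    have e1 : ∑ j, ξ j * (σ j * (ε * Real.exp (ε * t) * X j t
          + Real.exp (ε * t) * Psi j t))
        = ε * Real.exp (ε * t) * (∑ j, ξ j * |X j t|)
          + Real.exp (ε * t) * (∑ j, ξ j * σ j * Psi j t) := by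
      rw [Finset.mul_sum, Finset.mul_sum, ← Finset.sum_add_distrib]
      apply Finset.sum_congr rfl
      intro j _
      linear_combination (ε * Real.exp (ε * t) * ξ j) * hσ2 j
    have e2 : ∑ j, φ j * (ρ j * (ε * Real.exp (ε * t) * Y j t
          + Real.exp (ε * t) * Theta j t))
        = ε * Real.exp (ε * t) * (∑ j, φ j * |Y j t|)
          + Real.exp (ε * t) * (∑ j, φ j * ρ j * Theta j t) := by
      rw [Finset.mul_sum, Finset.mul_sum, ← Finset.sum_add_distrib]
      apply Finset.sum_congr rfl
      intro j _
      linear_combination (ε * Real.exp (ε * t) * φ j) * hρ2 j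
    have e3 : ∑ j, ∑ k, Real.exp (ε * τ j k) * (H j k t - H j k (t - τ j k))
        = Real.exp (ε * t) * (∑ j, ∑ k,
            (Du j k * |X k t| + Dv j k * |Y k t|) * Real.exp (ε * τ j k))
          - Real.exp (ε * t) * (∑ j, ∑ k,
            (Du j k * |X k (t - τ j k)| + Dv j k * |Y k (t - τ j k)|)) := by
      rw [Finset.mul_sum, Finset.mul_sum, ← Finset.sum_sub_distrib]
      apply Finset.sum_congr rfl
      intro j _
      rw [Finset.mul_sum, Finset.mul_sum, ← Finset.sum_sub_distrib]
      apply Finset.sum_congr rfl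
      intro k _
      simp only [hH]
      have hee : Real.exp (ε * τ j k) * Real.exp (ε * (t - τ j k)) = Real.exp (ε * t) := by
        rw [← Real.exp_add, show ε * τ j k + ε * (t - τ j k) = ε * t by ring]
      linear_combination
        (-(Du j k * |X k (t - τ j k)| + Dv j k * |Y k (t - τ j k)|)) * hee
    have hKey : (∑ j, ξ j * (σ j * (ε * Real.exp (ε * t) * X j t
          + Real.exp (ε * t) * Psi j t)))
        + (∑ j, φ j * (ρ j * (ε * Real.exp (ε * t) * Y j t
          + Real.exp (ε * t) * Theta j t)))
        + (∑ j, ∑ k, Real.exp (ε * τ j k) * (H j k t - H j k (t - τ j k))) ≤ 0 := by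
      rw [e1, e2, e3]
      have hbr : ε * (∑ j, ξ j * |X j t|) + ε * (∑ j, φ j * |Y j t|)
          + ((∑ j, ξ j * σ j * Psi j t) + (∑ j, φ j * ρ j * Theta j t))
          + ((∑ j, ∑ k, (Du j k * |X k t| + Dv j k * |Y k t|) * Real.exp (ε * τ j k))
            - (∑ j, ∑ k, (Du j k * |X k (t - τ j k)| + Dv j k * |Y k (t - τ j k)|))) ≤ 0 := by
        linarith [halg, h5, e4]
      have := mul_le_mul_of_nonneg_left hbr hE0.le
      linarith [this]
    -- eventual estimates
    set δ1 : ℝ := δ / ((∑ j, ξ j) + (∑ j, φ j) + 1) with hδ1def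
    have hden : (0:ℝ) < (∑ j, ξ j) + (∑ j, φ j) + 1 := by
      have h1 : (0:ℝ) ≤ ∑ j, ξ j := Finset.sum_nonneg (fun j _ => (hξ j).le)
      have h2 : (0:ℝ) ≤ ∑ j, φ j := Finset.sum_nonneg (fun j _ => (hφ j).le)
      linarith
    have hδ1 : 0 < δ1 := div_pos hδ hden
    have hδeq : ((∑ j, ξ j) + (∑ j, φ j) + 1) * δ1 = δ := by
      rw [hδ1def]; field_simp
    have hevR : ∀ j, ∀ᶠ z in nhdsWithin t (Ioi t),
        |Real.exp (ε * z) * X j z| ≤ |Real.exp (ε * t) * X j t|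
          + (σ j * (ε * Real.exp (ε * t) * X j t + Real.exp (ε * t) * Psi j t) + δ1)
            * (z - t) := by
      intro j
      have h2 : σ j * (Real.exp (ε * t) * X j t) = |Real.exp (ε * t) * X j t| := by
        rw [abs_mul, abs_of_pos hE0]
        linear_combination Real.exp (ε * t) * hσ2 j
      have h3 : Real.exp (ε * t) * X j t = 0 →
          |ε * Real.exp (ε * t) * X j t + Real.exp (ε * t) * Psi j t|
            ≤ σ j * (ε * Real.exp (ε * t) * X j t + Real.exp (ε * t) * Psi j t) := by
        intro h0
        have hX0 : X j t = 0 := by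
          rcases mul_eq_zero.mp h0 with h | h
          · exact absurd h (ne_of_gt hE0)
          · exact h
        have hσj : σ j = sgn (Psi j t) := by
          simp only [hσd]; rw [if_pos hX0]
        have heq : σ j * (ε * Real.exp (ε * t) * X j t + Real.exp (ε * t) * Psi j t)
            = |ε * Real.exp (ε * t) * X j t + Real.exp (ε * t) * Psi j t| := by
          simp only [hX0, mul_zero, zero_add, hσj]
          rw [abs_mul, abs_of_pos hE0]
          linear_combination Real.exp (ε * t) * sgn_mul_self (Psi j t)
        exact le_of_eq heq.symm
      exact abs_eventually_le ((hasDerivAt_exp_mul ε t).mul (hX' j t ht))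
        (hσ1 j) h2 h3 hδ1
    have hevI : ∀ j, ∀ᶠ z in nhdsWithin t (Ioi t),
        |Real.exp (ε * z) * Y j z| ≤ |Real.exp (ε * t) * Y j t|
          + (ρ j * (ε * Real.exp (ε * t) * Y j t + Real.exp (ε * t) * Theta j t) + δ1)
            * (z - t) := by
      intro j
      have h2 : ρ j * (Real.exp (ε * t) * Y j t) = |Real.exp (ε * t) * Y j t| := by
        rw [abs_mul, abs_of_pos hE0]
        linear_combination Real.exp (ε * t) * hρ2 j
      have h3 : Real.exp (ε * t) * Y j t = 0 →
          |ε * Real.exp (ε * t) * Y j t + Real.exp (ε * t) * Theta j t|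
            ≤ ρ j * (ε * Real.exp (ε * t) * Y j t + Real.exp (ε * t) * Theta j t) := by
        intro h0
        have hY0 : Y j t = 0 := by
          rcases mul_eq_zero.mp h0 with h | h
          · exact absurd h (ne_of_gt hE0)
          · exact h
        have hρj : ρ j = sgn (Theta j t) := by
          simp only [hρd]; rw [if_pos hY0]
        have heq : ρ j * (ε * Real.exp (ε * t) * Y j t + Real.exp (ε * t) * Theta j t)
            = |ε * Real.exp (ε * t) * Y j t + Real.exp (ε * t) * Theta j t| := by
          simp only [hY0, mul_zero, zero_add, hρj]
          rw [abs_mul, abs_of_pos hE0]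
          linear_combination Real.exp (ε * t) * sgn_mul_self (Theta j t)
        exact le_of_eq heq.symm
      exact abs_eventually_le ((hasDerivAt_exp_mul ε t).mul (hY' j t ht))
        (hρ1 j) h2 h3 hδ1
    have hIder' : HasDerivAt
        (fun z => ∑ j, ∑ k, Real.exp (ε * τ j k) * (F j k z - F j k (z - τ j k)))
        (∑ j, ∑ k, Real.exp (ε * τ j k) * (H j k t - H j k (t - τ j k))) t := by
      apply HasDerivAt.fun_sum
      intro j _
      apply HasDerivAt.fun_sum
      intro k _
      have hcomp : HasDerivAt (fun z => F j k (z - τ j k)) (H j k (t - τ j k)) t := by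
        simpa [Function.comp_def] using (hF' j k (t - τ j k)).comp t ((hasDerivAt_id t).sub_const (τ j k))
      exact ((hF' j k t).sub hcomp).const_mul _
    have hevIP := ev_upper hIder' hδ1
    have hsplit : ∀ z : ℝ, V z = (∑ j, ξ j * |Real.exp (ε * z) * X j z|)
        + (∑ j, φ j * |Real.exp (ε * z) * Y j z|)
        + (∑ j, ∑ k, Real.exp (ε * τ j k) * (F j k z - F j k (z - τ j k))) := by
      intro z
      have hA : ∀ (c : Fin n → ℝ) (W : Fin n → ℝ → ℝ),
          Real.exp (ε * z) * (∑ j, c j * |W j z|)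
            = ∑ j, c j * |Real.exp (ε * z) * W j z| := by
        intro c W
        rw [Finset.mul_sum]
        apply Finset.sum_congr rfl
        intro j _
        rw [abs_mul, abs_of_pos (Real.exp_pos _)]
        ring
      simp only [hV, hNN]
      rw [mul_add, hA ξ X, hA φ Y]
    filter_upwards [(Filter.eventually_all).mpr hevR, (Filter.eventually_all).mpr hevI,
      hevIP, self_mem_nhdsWithin] with z hzR hzI hzIP hzmem
    have hzt : 0 < z - t := by
      have : z ∈ Ioi t := hzmem
      simp only [Set.mem_Ioi] at this
      linarith
    have s1 : (∑ j, ξ j * |Real.exp (ε * z) * X j z|)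
        ≤ ∑ j, ξ j * (|Real.exp (ε * t) * X j t|
          + (σ j * (ε * Real.exp (ε * t) * X j t + Real.exp (ε * t) * Psi j t) + δ1)
            * (z - t)) :=
      Finset.sum_le_sum (fun j _ => mul_le_mul_of_nonneg_left (hzR j) (hξ j).le)
    have s2 : (∑ j, φ j * |Real.exp (ε * z) * Y j z|)
        ≤ ∑ j, φ j * (|Real.exp (ε * t) * Y j t|
          + (ρ j * (ε * Real.exp (ε * t) * Y j t + Real.exp (ε * t) * Theta j t) + δ1)
            * (z - t)) :=
      Finset.sum_le_sum (fun j _ => mul_le_mul_of_nonneg_left (hzI j) (hφ j).le)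
    rw [sum_expand1] at s1
    rw [sum_expand1] at s2
    have hKprod : ((∑ j, ξ j * (σ j * (ε * Real.exp (ε * t) * X j t
          + Real.exp (ε * t) * Psi j t)))
        + (∑ j, φ j * (ρ j * (ε * Real.exp (ε * t) * Y j t
          + Real.exp (ε * t) * Theta j t)))
        + (∑ j, ∑ k, Real.exp (ε * τ j k) * (H j k t - H j k (t - τ j k))))
          * (z - t) ≤ 0 := mul_nonpos_of_nonpos_of_nonneg hKey hzt.le
    have hδprod : (((∑ j, ξ j) + (∑ j, φ j) + 1) * δ1) * (z - t) = δ * (z - t) := by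
      rw [hδeq]
    rw [hsplit z, hsplit t]
    linarith [s1, s2, hzIP, hKprod, hδprod]
  have hanti := antitone_of_dini hVc hdini
  obtain ⟨t0, ht0mem, ht0max⟩ := isCompact_Icc.exists_isMaxOn
    (Set.nonempty_Icc.mpr (by norm_num : (0:ℝ) ≤ 1)) hVc.continuousOn
  set c : ℝ := max (V t0) 0 + 1 with hc
  refine ⟨c, by positivity, ?_⟩
  intro t ht
  have hVb : V t ≤ c := by
    rcases le_or_gt t 1 with h1 | h1
    · have := ht0max (Set.mem_Icc.mpr ⟨ht, h1⟩)
      have h2 : V t0 ≤ max (V t0) 0 := le_max_left _ _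
      simp only [hc]
      calc V t ≤ V t0 := this
        _ ≤ max (V t0) 0 + 1 := by linarith
    · have h2 : V t ≤ V 1 := hanti 1 t one_pos h1.le
      have h3 := ht0max (Set.mem_Icc.mpr ⟨(by norm_num : (0:ℝ) ≤ 1), le_refl (1:ℝ)⟩)
      have h4 : V t0 ≤ max (V t0) 0 := le_max_left _ _
      simp only [hc]
      calc V t ≤ V 1 := h2
        _ ≤ V t0 := h3
        _ ≤ max (V t0) 0 + 1 := by linarith
  have hmain : Real.exp (ε * t) * NN t ≤ c := le_trans (hVN t) hVb
  have hexp : (0:ℝ) < Real.exp (ε * t) := Real.exp_pos _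
  have : NN t ≤ c * Real.exp (-ε * t) := by
    have e : Real.exp (-ε * t) = (Real.exp (ε * t))⁻¹ := by
      rw [← Real.exp_neg]; ring_nf
    rw [e, ← div_eq_mul_inv, le_div_iff₀ hexp]
    linarith [mul_comm (NN t) (Real.exp (ε * t)), hmain]
  simpa [hNN] using this

lemma exp_neg_tendsto {ε : ℝ} (hε : 0 < ε) :
    Filter.Tendsto (fun s : ℝ => Real.exp (-ε * s)) Filter.atTop (nhds 0) := by
  have h1 : Filter.Tendsto (fun s : ℝ => -ε * s) Filter.atTop Filter.atBot := by
    have h0 := (Filter.tendsto_const_mul_atBot_of_neg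
      (show -ε < 0 by linarith)).mpr (tendsto_id (α := ℝ) (x := Filter.atTop))
    simpa using h0
  have h2 := Real.tendsto_exp_atBot.comp h1
  simpa only [Function.comp_def] using h2

set_option maxHeartbeats 800000 in
lemma tendsto_of_deriv_bound {f : ℝ → ℝ} {A ε : ℝ} (hf : ContDiff ℝ 1 f)
    (hε : 0 < ε) (hA : 0 ≤ A)
    (hbd : ∀ t : ℝ, 0 ≤ t → |deriv f t| ≤ A * Real.exp (-ε * t)) :
    ∃ L : ℝ, Filter.Tendsto f Filter.atTop (nhds L) ∧
      ∀ t : ℝ, 0 ≤ t → |f t - L| ≤ A / ε * Real.exp (-ε * t) := by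
  have hder : ∀ u : ℝ, HasDerivAt f (deriv f u) u :=
    fun u => ((hf.differentiable one_ne_zero) u).hasDerivAt
  have hdc : Continuous (deriv f) := hf.continuous_deriv le_rfl
  have hanti : ∀ u : ℝ, HasDerivAt (fun u => -(A/ε) * Real.exp (-ε * u))
      (A * Real.exp (-ε * u)) u := by
    intro u
    have h := (hasDerivAt_exp_mul (-ε) u).const_mul (-(A/ε))
    have hε0 : ε ≠ 0 := hε.ne'
    rw [show -(A/ε) * (-ε * Real.exp (-ε * u)) = (A/ε*ε) * Real.exp (-ε * u) by ring,
      div_mul_cancel₀ A hε0] at h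
    exact h
  have step1 : ∀ s t : ℝ, 0 ≤ s → s ≤ t → |f t - f s| ≤ A / ε * Real.exp (-ε * s) := by
    intro s t hs hst
    have hftc : ∫ u in s..t, deriv f u = f t - f s :=
      intervalIntegral.integral_deriv_eq_sub
        (fun x _ => (hf.differentiable one_ne_zero) x) (hdc.intervalIntegrable s t)
    have h1 : |∫ u in s..t, deriv f u| ≤ ∫ u in s..t, |deriv f u| :=
      intervalIntegral.abs_integral_le_integral_abs hst
    have h2 : (∫ u in s..t, |deriv f u|) ≤ ∫ u in s..t, A * Real.exp (-ε * u) := by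
      apply intervalIntegral.integral_mono_on hst
        (hdc.abs.intervalIntegrable s t)
        ((continuous_const.mul (Real.continuous_exp.comp
          (continuous_const.mul continuous_id))).intervalIntegrable s t)
      intro u hu
      exact hbd u (le_trans hs hu.1)
    have h3 : (∫ u in s..t, A * Real.exp (-ε * u))
        = -(A/ε) * Real.exp (-ε * t) - (-(A/ε) * Real.exp (-ε * s)) :=
      intervalIntegral.integral_eq_sub_of_hasDerivAt (fun u _ => hanti u)
        ((continuous_const.mul (Real.continuous_exp.comp
          (continuous_const.mul continuous_id))).intervalIntegrable s t)
    have h4 : (0:ℝ) ≤ A / ε * Real.exp (-ε * t) := by positivity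
    rw [← hftc]
    calc |∫ u in s..t, deriv f u| ≤ ∫ u in s..t, |deriv f u| := h1
      _ ≤ ∫ u in s..t, A * Real.exp (-ε * u) := h2
      _ = -(A/ε) * Real.exp (-ε * t) - (-(A/ε) * Real.exp (-ε * s)) := h3
      _ ≤ A / ε * Real.exp (-ε * s) := by nlinarith
  have hb0 : Filter.Tendsto (fun N : ℕ => 2 * (A / ε) * Real.exp (-ε * N))
      Filter.atTop (nhds 0) := by
    have h := ((exp_neg_tendsto hε).comp tendsto_natCast_atTop_atTop).const_mul
      (2 * (A / ε))
    simpa [Function.comp] using h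
  have hCau : CauchySeq (fun m : ℕ => f m) := by
    apply cauchySeq_of_le_tendsto_0 (fun N : ℕ => 2 * (A / ε) * Real.exp (-ε * N))
      _ hb0
    intro p q N hNp hNq
    have hp := step1 N p (Nat.cast_nonneg N) (by exact_mod_cast hNp)
    have hq := step1 N q (Nat.cast_nonneg N) (by exact_mod_cast hNq)
    have : dist (f p) (f q) ≤ dist (f p) (f N) + dist (f N) (f q) := dist_triangle _ _ _
    rw [Real.dist_eq, Real.dist_eq, Real.dist_eq] at *
    calc |f p - f q| ≤ |f p - f N| + |f N - f q| := by
          have := abs_sub_le (f p) (f N) (f q); linarith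
      _ ≤ A / ε * Real.exp (-ε * N) + A / ε * Real.exp (-ε * N) := by
          rw [abs_sub_comm (f N) (f q)]
          exact add_le_add hp hq
      _ = 2 * (A / ε) * Real.exp (-ε * N) := by ring
  obtain ⟨L, hL⟩ := cauchySeq_tendsto_of_complete hCau
  have hTend : Filter.Tendsto f Filter.atTop (nhds L) := by
    rw [Metric.tendsto_atTop]
    intro ε' hε'
    have h1 := (Metric.tendsto_atTop.mp hL) (ε'/2) (by linarith)
    obtain ⟨N1, hN1⟩ := h1
    have h2 : ∀ᶠ N : ℕ in Filter.atTop,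
        A / ε * Real.exp (-ε * N) < ε'/2 := by
      have hb0' : Filter.Tendsto (fun N : ℕ => A / ε * Real.exp (-ε * N))
          Filter.atTop (nhds 0) := by
        have h := ((exp_neg_tendsto hε).comp tendsto_natCast_atTop_atTop).const_mul (A / ε)
        simpa [Function.comp] using h
      exact hb0'.eventually_lt_const (by linarith)
    obtain ⟨N2, hN2⟩ := Filter.eventually_atTop.mp h2
    set N := max N1 N2 with hN
    refine ⟨(N : ℝ), ?_⟩
    intro t hNt
    have hstep := step1 N t (Nat.cast_nonneg N) hNt
    have hdN : dist (f N) L < ε'/2 := hN1 N (le_max_left _ _)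
    have hexp : A / ε * Real.exp (-ε * N) < ε'/2 := hN2 N (le_max_right _ _)
    calc dist (f t) L ≤ dist (f t) (f N) + dist (f N) L := dist_triangle _ _ _
      _ < A / ε * Real.exp (-ε * N) + ε'/2 := by
          rw [Real.dist_eq]
          exact add_lt_add_of_le_of_lt hstep hdN
      _ < ε'/2 + ε'/2 := by linarith
      _ = ε' := by ring
  refine ⟨L, hTend, ?_⟩
  intro t ht
  have hT : Filter.Tendsto (fun s => |f s - f t|) Filter.atTop (nhds (|L - f t|)) :=
    ((hTend.sub_const (f t)).abs)
  have hev : ∀ᶠ s : ℝ in Filter.atTop, |f s - f t| ≤ A / ε * Real.exp (-ε * t) := by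
    filter_upwards [Filter.eventually_ge_atTop t] with s hs
    exact step1 t s ht hs
  have := le_of_tendsto hT hev
  rwa [abs_sub_comm] at this

lemma limit_equilibrium (n : ℕ) (d : Fin n → ℝ)
    (aR aI bR bI τ : Fin n → Fin n → ℝ)
    (uR uI : Fin n → ℝ) (fR fI gR gI : Fin n → ℝ → ℝ → ℝ)
    (hfcd : ∀ j, ContDiff ℝ 1 (fun p : ℝ × ℝ => fR j p.1 p.2))
    (hfcd' : ∀ j, ContDiff ℝ 1 (fun p : ℝ × ℝ => fI j p.1 p.2))
    (hgcd : ∀ j, ContDiff ℝ 1 (fun p : ℝ × ℝ => gR j p.1 p.2))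
    (hgcd' : ∀ j, ContDiff ℝ 1 (fun p : ℝ × ℝ => gI j p.1 p.2))
    (zR zI : Fin n → ℝ → ℝ)
    (hode1 : ∀ j : Fin n, ∀ t : ℝ, 0 ≤ t →
      deriv (zR j) t =
        -(d j) * zR j t
        + (∑ k, (aR j k * fR k (zR k t) (zI k t) - aI j k * fI k (zR k t) (zI k t)))
        + (∑ k, (bR j k * gR k (zR k (t - τ j k)) (zI k (t - τ j k))
                 - bI j k * gI k (zR k (t - τ j k)) (zI k (t - τ j k))))
        + uR j)
    (hode2 : ∀ j : Fin n, ∀ t : ℝ, 0 ≤ t →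
      deriv (zI j) t =
        -(d j) * zI j t
        + (∑ k, (aR j k * fI k (zR k t) (zI k t) + aI j k * fR k (zR k t) (zI k t)))
        + (∑ k, (bR j k * gI k (zR k (t - τ j k)) (zI k (t - τ j k))
                 + bI j k * gR k (zR k (t - τ j k)) (zI k (t - τ j k))))
        + uI j)
    (zbR zbI : Fin n → ℝ)
    (hR : ∀ j, Filter.Tendsto (zR j) Filter.atTop (nhds (zbR j)))
    (hI : ∀ j, Filter.Tendsto (zI j) Filter.atTop (nhds (zbI j)))
    (hR0 : ∀ j, Filter.Tendsto (fun t => deriv (zR j) t) Filter.atTop (nhds 0))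
    (hI0 : ∀ j, Filter.Tendsto (fun t => deriv (zI j) t) Filter.atTop (nhds 0)) :
    IsEquilibrium n d aR aI bR bI uR uI fR fI gR gI zbR zbI := by
  have hdelR : ∀ (k : Fin n) (c : ℝ),
      Filter.Tendsto (fun t => zR k (t - c)) Filter.atTop (nhds (zbR k)) := by
    intro k c
    have h1 : Filter.Tendsto (fun t : ℝ => t - c) Filter.atTop Filter.atTop := by
      have h0 := Filter.tendsto_atTop_add_const_right Filter.atTop (-c)
        (Filter.tendsto_id (α := ℝ) (x := Filter.atTop))
      refine h0.congr ?_
      intro x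
      simp [sub_eq_add_neg]
    exact (hR k).comp h1
  have hdelI : ∀ (k : Fin n) (c : ℝ),
      Filter.Tendsto (fun t => zI k (t - c)) Filter.atTop (nhds (zbI k)) := by
    intro k c
    have h1 : Filter.Tendsto (fun t : ℝ => t - c) Filter.atTop Filter.atTop := by
      have h0 := Filter.tendsto_atTop_add_const_right Filter.atTop (-c)
        (Filter.tendsto_id (α := ℝ) (x := Filter.atTop))
      refine h0.congr ?_
      intro x
      simp [sub_eq_add_neg]
    exact (hI k).comp h1
  have hfRt : ∀ k : Fin n, Filter.Tendsto (fun t => fR k (zR k t) (zI k t))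
      Filter.atTop (nhds (fR k (zbR k) (zbI k))) := by
    intro k
    exact (((hfcd k).continuous.tendsto (zbR k, zbI k)).comp
      ((hR k).prodMk_nhds (hI k)))
  have hfIt : ∀ k : Fin n, Filter.Tendsto (fun t => fI k (zR k t) (zI k t))
      Filter.atTop (nhds (fI k (zbR k) (zbI k))) := by
    intro k
    exact (((hfcd' k).continuous.tendsto (zbR k, zbI k)).comp
      ((hR k).prodMk_nhds (hI k)))
  have hgRt : ∀ (j k : Fin n), Filter.Tendsto
      (fun t => gR k (zR k (t - τ j k)) (zI k (t - τ j k)))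
      Filter.atTop (nhds (gR k (zbR k) (zbI k))) := by
    intro j k
    exact (((hgcd k).continuous.tendsto (zbR k, zbI k)).comp
      ((hdelR k (τ j k)).prodMk_nhds (hdelI k (τ j k))))
  have hgIt : ∀ (j k : Fin n), Filter.Tendsto
      (fun t => gI k (zR k (t - τ j k)) (zI k (t - τ j k)))
      Filter.atTop (nhds (gI k (zbR k) (zbI k))) := by
    intro j k
    exact (((hgcd' k).continuous.tendsto (zbR k, zbI k)).comp
      ((hdelR k (τ j k)).prodMk_nhds (hdelI k (τ j k))))
  constructor
  · intro j
    have hRHS : Filter.Tendsto (fun t =>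
        -(d j) * zR j t
        + (∑ k, (aR j k * fR k (zR k t) (zI k t) - aI j k * fI k (zR k t) (zI k t)))
        + (∑ k, (bR j k * gR k (zR k (t - τ j k)) (zI k (t - τ j k))
                 - bI j k * gI k (zR k (t - τ j k)) (zI k (t - τ j k))))
        + uR j) Filter.atTop (nhds (
        -(d j) * zbR j
        + (∑ k, (aR j k * fR k (zbR k) (zbI k) - aI j k * fI k (zbR k) (zbI k)))
        + (∑ k, (bR j k * gR k (zbR k) (zbI k) - bI j k * gI k (zbR k) (zbI k)))
        + uR j)) := by
      apply Filter.Tendsto.add_const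
      apply Filter.Tendsto.add
      apply Filter.Tendsto.add
      · exact (hR j).const_mul _
      · exact tendsto_finset_sum _ (fun k _ =>
          ((hfRt k).const_mul _).sub ((hfIt k).const_mul _))
      · exact tendsto_finset_sum _ (fun k _ =>
          ((hgRt j k).const_mul _).sub ((hgIt j k).const_mul _))
    have hcongr : Filter.Tendsto (fun t => deriv (zR j) t) Filter.atTop (nhds (
        -(d j) * zbR j
        + (∑ k, (aR j k * fR k (zbR k) (zbI k) - aI j k * fI k (zbR k) (zbI k)))
        + (∑ k, (bR j k * gR k (zbR k) (zbI k) - bI j k * gI k (zbR k) (zbI k)))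
        + uR j)) := by
      apply hRHS.congr'
      filter_upwards [Filter.eventually_ge_atTop (0:ℝ)] with t ht
      exact (hode1 j t ht).symm
    exact tendsto_nhds_unique hcongr (hR0 j)
  · intro j
    have hRHS : Filter.Tendsto (fun t =>
        -(d j) * zI j t
        + (∑ k, (aR j k * fI k (zR k t) (zI k t) + aI j k * fR k (zR k t) (zI k t)))
        + (∑ k, (bR j k * gI k (zR k (t - τ j k)) (zI k (t - τ j k))
                 + bI j k * gR k (zR k (t - τ j k)) (zI k (t - τ j k))))
        + uI j) Filter.atTop (nhds (
        -(d j) * zbI j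
        + (∑ k, (aR j k * fI k (zbR k) (zbI k) + aI j k * fR k (zbR k) (zbI k)))
        + (∑ k, (bR j k * gI k (zbR k) (zbI k) + bI j k * gR k (zbR k) (zbI k)))
        + uI j)) := by
      apply Filter.Tendsto.add_const
      apply Filter.Tendsto.add
      apply Filter.Tendsto.add
      · exact (hI j).const_mul _
      · exact tendsto_finset_sum _ (fun k _ =>
          ((hfIt k).const_mul _).add ((hfRt k).const_mul _))
      · exact tendsto_finset_sum _ (fun k _ =>
          ((hgIt j k).const_mul _).add ((hgRt j k).const_mul _))
    have hcongr : Filter.Tendsto (fun t => deriv (zI j) t) Filter.atTop (nhds (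
        -(d j) * zbI j
        + (∑ k, (aR j k * fI k (zbR k) (zbI k) + aI j k * fR k (zbR k) (zbI k)))
        + (∑ k, (bR j k * gI k (zbR k) (zbI k) + bI j k * gR k (zbR k) (zbI k)))
        + uI j)) := by
      apply hRHS.congr'
      filter_upwards [Filter.eventually_ge_atTop (0:ℝ)] with t ht
      exact (hode2 j t ht).symm
    exact tendsto_nhds_unique hcongr (hI0 j)

end Aux

theorem stmt3
    (n : ℕ) (hn : 1 ≤ n)
    (d : Fin n → ℝ) (hd : ∀ j, 0 < d j)
    (aR aI bR bI τ : Fin n → Fin n → ℝ) (hτ : ∀ j k, 0 ≤ τ j k)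
    (uR uI : Fin n → ℝ)
    (fR fI gR gI : Fin n → ℝ → ℝ → ℝ)
    (lRR lRI lIR lII mRR mRI mIR mII : Fin n → ℝ)
    (hl : ∀ j, 0 < lRR j ∧ 0 < lRI j ∧ 0 < lIR j ∧ 0 < lII j)
    (hm : ∀ j, 0 < mRR j ∧ 0 < mRI j ∧ 0 < mIR j ∧ 0 < mII j)
    (hf : ∀ j, CondH1 (fR j) (fI j) (lRR j) (lRI j) (lIR j) (lII j))
    (hg : ∀ j, CondH2 (gR j) (gI j) (mRR j) (mRI j) (mIR j) (mII j))
    (ξ φ : Fin n → ℝ) (hξ : ∀ j, 0 < ξ j) (hφ : ∀ j, 0 < φ j)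
    (ε : ℝ) (hε : 0 < ε)
    (hT7 : ∀ k : Fin n,
      ξ k * (-(d k) + ε)
      + max (ξ k * aR k k + (∑ j ∈ Finset.univ.erase k, ξ j * |aR j k|)
             + (∑ j, φ j * |aI j k|)) 0 * lRR k
      + max (-(ξ k * aI k k) + (∑ j ∈ Finset.univ.erase k, ξ j * |aI j k|)
             + (∑ j, φ j * |aR j k|)) 0 * lIR k
      + (∑ j, (ξ j * (|bR j k| * mRR k + |bI j k| * mIR k)
               + φ j * (|bR j k| * mIR k + |bI j k| * mRR k)) * Real.exp (ε * τ j k))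
      ≤ 0)
    (hT8 : ∀ k : Fin n,
      φ k * (-(d k) + ε)
      + max (φ k * aR k k + (∑ j ∈ Finset.univ.erase k, φ j * |aR j k|)
             + (∑ j, ξ j * |aI j k|)) 0 * lII k
      + max (φ k * aI k k + (∑ j ∈ Finset.univ.erase k, φ j * |aI j k|)
             + (∑ j, ξ j * |aR j k|)) 0 * lRI k
      + (∑ j, (ξ j * (|bR j k| * mRI k + |bI j k| * mII k)
               + φ j * (|bR j k| * mII k + |bI j k| * mRI k)) * Real.exp (ε * τ j k))
      ≤ 0)
    (hsol : ∃ zR zI, IsSolution n d aR aI bR bI τ uR uI fR fI gR gI zR zI) :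
    ∃ zbR zbI : Fin n → ℝ,
      IsEquilibrium n d aR aI bR bI uR uI fR fI gR gI zbR zbI ∧
      (∀ wR wI : Fin n → ℝ,
        IsEquilibrium n d aR aI bR bI uR uI fR fI gR gI wR wI → wR = zbR ∧ wI = zbI) ∧
      (∀ zR zI : Fin n → ℝ → ℝ,
        IsSolution n d aR aI bR bI τ uR uI fR fI gR gI zR zI →
        ∃ c : ℝ, 0 < c ∧ ∀ t : ℝ, 0 ≤ t →
          ((∑ j, ξ j * |zR j t - zbR j|) + (∑ j, φ j * |zI j t - zbI j|)
              ≤ c * Real.exp (-ε * t)) ∧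
          ((∑ j, ξ j * |deriv (zR j) t|) + (∑ j, φ j * |deriv (zI j) t|)
              ≤ c * Real.exp (-ε * t))) := by
  classical
  obtain ⟨zR0, zI0, hs0⟩ := hsol
  obtain ⟨hzRc0, hzIc0, hode10, hode20⟩ := hs0
  have hfcd : ∀ j, ContDiff ℝ 1 (fun p : ℝ × ℝ => fR j p.1 p.2) := fun j => (hf j).1
  have hfcd' : ∀ j, ContDiff ℝ 1 (fun p : ℝ × ℝ => fI j p.1 p.2) := fun j => (hf j).2.1
  have hfbd := fun j => (hf j).2.2
  have hgcd : ∀ j, ContDiff ℝ 1 (fun p : ℝ × ℝ => gR j p.1 p.2) := fun j => (hg j).1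
  have hgcd' : ∀ j, ContDiff ℝ 1 (fun p : ℝ × ℝ => gI j p.1 p.2) := fun j => (hg j).2.1
  have hgbd := fun j => (hg j).2.2
  -- a package producing, for any solution, the decay constant, the limits, etc.
  have pack : ∀ zR1 zI1 : Fin n → ℝ → ℝ,
      (∀ j, ContDiff ℝ 1 (zR1 j)) → (∀ j, ContDiff ℝ 1 (zI1 j)) →
      (∀ j : Fin n, ∀ t : ℝ, 0 ≤ t →
        deriv (zR1 j) t =
          -(d j) * zR1 j t
          + (∑ k, (aR j k * fR k (zR1 k t) (zI1 k t) - aI j k * fI k (zR1 k t) (zI1 k t)))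
          + (∑ k, (bR j k * gR k (zR1 k (t - τ j k)) (zI1 k (t - τ j k))
                   - bI j k * gI k (zR1 k (t - τ j k)) (zI1 k (t - τ j k))))
          + uR j) →
      (∀ j : Fin n, ∀ t : ℝ, 0 ≤ t →
        deriv (zI1 j) t =
          -(d j) * zI1 j t
          + (∑ k, (aR j k * fI k (zR1 k t) (zI1 k t) + aI j k * fR k (zR1 k t) (zI1 k t)))
          + (∑ k, (bR j k * gI k (zR1 k (t - τ j k)) (zI1 k (t - τ j k))
                   + bI j k * gR k (zR1 k (t - τ j k)) (zI1 k (t - τ j k))))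
          + uI j) →
      ∃ (c1 : ℝ) (wR wI : Fin n → ℝ), 0 < c1 ∧
        IsEquilibrium n d aR aI bR bI uR uI fR fI gR gI wR wI ∧
        (∀ t : ℝ, 0 ≤ t →
          (∑ j, ξ j * |deriv (zR1 j) t|) + (∑ j, φ j * |deriv (zI1 j) t|)
            ≤ c1 * Real.exp (-ε * t)) ∧
        (∀ j, ∀ t : ℝ, 0 ≤ t → |zR1 j t - wR j| ≤ (c1 / ξ j) / ε * Real.exp (-ε * t)) ∧
        (∀ j, ∀ t : ℝ, 0 ≤ t → |zI1 j t - wI j| ≤ (c1 / φ j) / ε * Real.exp (-ε * t)) := by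
    intro zR1 zI1 hzRc1 hzIc1 hode11 hode21
    obtain ⟨c1, hc1p, hdec1⟩ := decay n d aR aI bR bI τ hτ uR uI fR fI gR gI
      lRR lRI lIR lII mRR mRI mIR mII hl hm hfcd hfcd' hfbd hgcd hgcd' hgbd
      ξ φ hξ hφ ε hε hT7 hT8 zR1 zI1 hzRc1 hzIc1 hode11 hode21
    have hXbd : ∀ (j : Fin n) (t : ℝ), 0 ≤ t →
        |deriv (zR1 j) t| ≤ (c1 / ξ j) * Real.exp (-ε * t) := by
      intro j t ht
      have h := hdec1 t ht
      have hs1 : ξ j * |deriv (zR1 j) t| ≤ ∑ j', ξ j' * |deriv (zR1 j') t| :=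
        Finset.single_le_sum (f := fun i => ξ i * |deriv (zR1 i) t|)
          (fun i _ => mul_nonneg (hξ i).le (abs_nonneg _)) (Finset.mem_univ j)
      have hs2 : (0:ℝ) ≤ ∑ j', φ j' * |deriv (zI1 j') t| :=
        Finset.sum_nonneg (fun i _ => mul_nonneg (hφ i).le (abs_nonneg _))
      rw [div_mul_eq_mul_div, le_div_iff₀ (hξ j)]
      nlinarith
    have hYbd : ∀ (j : Fin n) (t : ℝ), 0 ≤ t →
        |deriv (zI1 j) t| ≤ (c1 / φ j) * Real.exp (-ε * t) := by
      intro j t ht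
      have h := hdec1 t ht
      have hs1 : φ j * |deriv (zI1 j) t| ≤ ∑ j', φ j' * |deriv (zI1 j') t| :=
        Finset.single_le_sum (f := fun i => φ i * |deriv (zI1 i) t|)
          (fun i _ => mul_nonneg (hφ i).le (abs_nonneg _)) (Finset.mem_univ j)
      have hs2 : (0:ℝ) ≤ ∑ j', ξ j' * |deriv (zR1 j') t| :=
        Finset.sum_nonneg (fun i _ => mul_nonneg (hξ i).le (abs_nonneg _))
      rw [div_mul_eq_mul_div, le_div_iff₀ (hφ j)]
      nlinarith
    have hlimR : ∀ j, ∃ L, Filter.Tendsto (zR1 j) Filter.atTop (nhds L) ∧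
        ∀ t : ℝ, 0 ≤ t → |zR1 j t - L| ≤ (c1 / ξ j) / ε * Real.exp (-ε * t) :=
      fun j => tendsto_of_deriv_bound (hzRc1 j) hε
        (div_nonneg hc1p.le (hξ j).le) (hXbd j)
    have hlimI : ∀ j, ∃ L, Filter.Tendsto (zI1 j) Filter.atTop (nhds L) ∧
        ∀ t : ℝ, 0 ≤ t → |zI1 j t - L| ≤ (c1 / φ j) / ε * Real.exp (-ε * t) :=
      fun j => tendsto_of_deriv_bound (hzIc1 j) hε
        (div_nonneg hc1p.le (hφ j).le) (hYbd j)
    choose wR hwR1 hwR2 using hlimR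
    choose wI hwI1 hwI2 using hlimI
    have hX0 : ∀ j, Filter.Tendsto (fun t => deriv (zR1 j) t) Filter.atTop (nhds 0) := by
      intro j
      have hg1 : Filter.Tendsto (fun t : ℝ => (c1 / ξ j) * Real.exp (-ε * t))
          Filter.atTop (nhds 0) := by
        have := (exp_neg_tendsto hε).const_mul (c1 / ξ j)
        simpa using this
      apply squeeze_zero_norm' _ hg1
      filter_upwards [Filter.eventually_ge_atTop (0:ℝ)] with t ht
      simpa [Real.norm_eq_abs] using hXbd j t ht
    have hY0 : ∀ j, Filter.Tendsto (fun t => deriv (zI1 j) t) Filter.atTop (nhds 0) := by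
      intro j
      have hg1 : Filter.Tendsto (fun t : ℝ => (c1 / φ j) * Real.exp (-ε * t))
          Filter.atTop (nhds 0) := by
        have := (exp_neg_tendsto hε).const_mul (c1 / φ j)
        simpa using this
      apply squeeze_zero_norm' _ hg1
      filter_upwards [Filter.eventually_ge_atTop (0:ℝ)] with t ht
      simpa [Real.norm_eq_abs] using hYbd j t ht
    have hEq1 := limit_equilibrium n d aR aI bR bI τ uR uI fR fI gR gI
      hfcd hfcd' hgcd hgcd' zR1 zI1 hode11 hode21 wR wI hwR1 hwI1 hX0 hY0
    exact ⟨c1, wR, wI, hc1p, hEq1, hdec1, hwR2, hwI2⟩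
  obtain ⟨c0, zbR, zbI, hc0p, hEq, hdec0, hzb1, hzb2⟩ :=
    pack zR0 zI0 hzRc0 hzIc0 hode10 hode20
  refine ⟨zbR, zbI, hEq, ?_, ?_⟩
  · intro wR wI hw
    exact equilibrium_unique n d aR aI bR bI τ hτ uR uI fR fI gR gI
      lRR lRI lIR lII mRR mRI mIR mII hl hm hfcd hfcd' hfbd hgcd hgcd' hgbd
      ξ φ hξ hφ ε hε hT7 hT8 wR wI zbR zbI hw.1 hw.2 hEq.1 hEq.2
  · intro zR1 zI1 hs1
    obtain ⟨hzRc1, hzIc1, hode11, hode21⟩ := hs1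
    obtain ⟨c1, wR, wI, hc1p, hEq1, hdec1, hw1, hw2⟩ :=
      pack zR1 zI1 hzRc1 hzIc1 hode11 hode21
    have huniq : wR = zbR ∧ wI = zbI :=
      equilibrium_unique n d aR aI bR bI τ hτ uR uI fR fI gR gI
        lRR lRI lIR lII mRR mRI mIR mII hl hm hfcd hfcd' hfbd hgcd hgcd' hgbd
        ξ φ hξ hφ ε hε hT7 hT8 wR wI zbR zbI hEq1.1 hEq1.2 hEq.1 hEq.2
    have hnn : (0:ℝ) ≤ 2 * (n:ℝ) * (c1 / ε) := by positivity
    refine ⟨c1 + 2 * (n:ℝ) * (c1 / ε), by linarith, ?_⟩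
    intro t ht
    have hexp0 : (0:ℝ) < Real.exp (-ε * t) := Real.exp_pos _
    constructor
    · have hb1 : ∀ j : Fin n, ξ j * |zR1 j t - zbR j| ≤ (c1 / ε) * Real.exp (-ε * t) := by
        intro j
        have h := hw1 j t ht
        rw [huniq.1] at h
        calc ξ j * |zR1 j t - zbR j|
            ≤ ξ j * ((c1 / ξ j) / ε * Real.exp (-ε * t)) :=
              mul_le_mul_of_nonneg_left h (hξ j).le
          _ = (c1 / ε) * Real.exp (-ε * t) := by
              have : ξ j ≠ 0 := (hξ j).ne'
              field_simp
      have hb2 : ∀ j : Fin n, φ j * |zI1 j t - zbI j| ≤ (c1 / ε) * Real.exp (-ε * t) := by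
        intro j
        have h := hw2 j t ht
        rw [huniq.2] at h
        calc φ j * |zI1 j t - zbI j|
            ≤ φ j * ((c1 / φ j) / ε * Real.exp (-ε * t)) :=
              mul_le_mul_of_nonneg_left h (hφ j).le
          _ = (c1 / ε) * Real.exp (-ε * t) := by
              have : φ j ≠ 0 := (hφ j).ne'
              field_simp
      have hs1' : (∑ j, ξ j * |zR1 j t - zbR j|)
          ≤ (n:ℝ) * ((c1 / ε) * Real.exp (-ε * t)) := by
        calc (∑ j, ξ j * |zR1 j t - zbR j|)
            ≤ ∑ _j : Fin n, (c1 / ε) * Real.exp (-ε * t) :=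
              Finset.sum_le_sum (fun j _ => hb1 j)
          _ = (n:ℝ) * ((c1 / ε) * Real.exp (-ε * t)) := by
              rw [Finset.sum_const, Finset.card_fin, nsmul_eq_mul]
      have hs2' : (∑ j, φ j * |zI1 j t - zbI j|)
          ≤ (n:ℝ) * ((c1 / ε) * Real.exp (-ε * t)) := by
        calc (∑ j, φ j * |zI1 j t - zbI j|)
            ≤ ∑ _j : Fin n, (c1 / ε) * Real.exp (-ε * t) :=
              Finset.sum_le_sum (fun j _ => hb2 j)
          _ = (n:ℝ) * ((c1 / ε) * Real.exp (-ε * t)) := by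
              rw [Finset.sum_const, Finset.card_fin, nsmul_eq_mul]
      have hc1e : (0:ℝ) ≤ c1 * Real.exp (-ε * t) := by positivity
      nlinarith
    · have h := hdec1 t ht
      have h0 : (0:ℝ) ≤ 2 * (n:ℝ) * (c1 / ε) * Real.exp (-ε * t) := by positivity
      nlinarith
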